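/- arXiv:0910.3091 — 9 statements merged into one kernel-verified Lean document; each statement's English description precedes it below -/
import Mathlib

section
/- Every infinite compact Hausdorff space K has a bidiscrete system of cardinality d(K), the density of K. -/
open Cardinal

universe u

/-- The density of a topological space: the least cardinality of a dense subset. -/
noncomputable def density (X : Type u) [TopologicalSpace X] : Cardinal.{u} :=
  sInf {c : Cardinal.{u} | ∃ s : Set X, Dense s ∧ #s = c}

/-- A set of pairs of points of `K` is a *bidiscrete system* in `K` if there are
continuous real-valued functions, one for each pair `p` in the system, taking the value `0`
on the first coordinate of `p`, the value `1` on the second coordinate of `p`, and taking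
equal values on the two coordinates of every other pair of the system. -/
def IsBidiscrete {K : Type u} [TopologicalSpace K] (S : Set (K × K)) : Prop :=
  ∃ f : S → C(K, ℝ), ∀ p : S,
    f p (p : K × K).1 = 0 ∧ f p (p : K × K).2 = 1 ∧
    ∀ q : S, q ≠ p → f p (q : K × K).1 = f p (q : K × K).2

section Aux

variable {K : Type u} [TopologicalSpace K]

lemma density_le_of_dense (s : Set K) (hs : Dense s) : density K ≤ #s :=
  csInf_le' ⟨s, hs, rfl⟩

lemma exists_dense_density (K : Type u) [TopologicalSpace K] :
    ∃ s : Set K, Dense s ∧ #s = density K := by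
  have h : {c : Cardinal.{u} | ∃ s : Set K, Dense s ∧ #s = c}.Nonempty :=
    ⟨#(Set.univ : Set K), Set.univ, dense_univ, rfl⟩
  exact csInf_mem h

lemma not_dense_of_lt_density {s : Set K} (h : #s < density K) : ¬ Dense s :=
  fun hd => absurd (density_le_of_dense s hd) (not_le.2 h)

lemma aleph0_le_density (K : Type u) [TopologicalSpace K] [T1Space K] [Infinite K] :
    ℵ₀ ≤ density K := by
  obtain ⟨s, hs, hcard⟩ := exists_dense_density K
  rw [← hcard, Cardinal.aleph0_le_mk_iff, Set.infinite_coe_iff]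
  intro hfin
  have h1 : closure s = s := hfin.isClosed.closure_eq
  have h2 : s = Set.univ := by rw [← hs.closure_eq, h1]
  have h3 : (Set.univ : Set K).Finite := h2 ▸ hfin
  rw [Set.finite_univ_iff] at h3
  haveI := h3; exact not_finite K

variable [CompactSpace K] [T2Space K] [Infinite K]

/-- Key step lemma: given fewer than `density K` points `T` and functions `Gs`, one can find
a pair `(u, x)` with `x` outside the closure of `T`, unseparated by every function of `Gs`,
together with a continuous function which is `0` at `u` and on `T`, and `1` at `x`. -/
lemma key_step (hbig : ℵ₀ < density K) (T : Set K) (hT : #T < density K)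
    (Gs : Set C(K, ℝ)) (hGs : #Gs < density K) :
    ∃ u x : K, ∃ f : C(K, ℝ), x ∉ closure T ∧ u ≠ x ∧ (∀ g ∈ Gs, g u = g x) ∧
      f x = 1 ∧ f u = 0 ∧ ∀ y ∈ T, f y = 0 := by
  have hpair : ∃ u x : K, x ∉ closure T ∧ u ≠ x ∧ ∀ g ∈ Gs, g u = g x := by
    by_contra hcon
    push_neg at hcon
    -- hcon : ∀ u x, x ∉ closure T → u ≠ x → ∃ g ∈ Gs, g u ≠ g x
    set F : K → (↥Gs → ℝ) := fun k g => (g : C(K, ℝ)) k with hF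
    have hFc : Continuous F := continuous_pi fun g => g.1.continuous
    set b : List (↥Gs × ℚ × ℚ) → Set (↥Gs → ℝ) :=
      fun l => {h | ∀ t ∈ l, (t.2.1 : ℝ) < h t.1 ∧ h t.1 < (t.2.2 : ℝ)} with hb
    have hbasis : ∀ O : Set (↥Gs → ℝ), IsOpen O → ∀ h ∈ O, ∃ l, h ∈ b l ∧ b l ⊆ O := by
      intro O hO h hh
      obtain ⟨I, uu, hIu, hsub⟩ := isOpen_pi_iff.1 hO h hh
      have hchoice : ∀ a : ↥Gs, ∃ pq : ℚ × ℚ, a ∈ I →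
          ((pq.1 : ℝ) < h a ∧ h a < (pq.2 : ℝ)) ∧ Set.Ioo (pq.1 : ℝ) (pq.2 : ℝ) ⊆ uu a := by
        intro a
        by_cases ha : a ∈ I
        · obtain ⟨hopen, hmem⟩ := hIu a ha
          obtain ⟨ε, hε, hball⟩ := Metric.isOpen_iff.1 hopen (h a) hmem
          obtain ⟨p, hp1, hp2⟩ := exists_rat_btwn (show h a - ε < h a by linarith)
          obtain ⟨q, hq1, hq2⟩ := exists_rat_btwn (show h a < h a + ε by linarith)
          refine ⟨(p, q), fun _ => ⟨⟨hp2, hq1⟩, fun y hy => hball ?_⟩⟩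
          rw [Metric.mem_ball, Real.dist_eq, abs_lt]
          obtain ⟨hy1, hy2⟩ := hy
          constructor <;> linarith
        · exact ⟨(0, 0), fun ha' => absurd ha' ha⟩
      choose r hr using hchoice
      refine ⟨I.toList.map fun a => (a, r a), ?_, ?_⟩
      · intro t ht
        simp only [List.mem_map, Finset.mem_toList] at ht
        obtain ⟨a, haI, rfl⟩ := ht
        exact (hr a haI).1
      · intro h' hh'
        apply hsub
        intro a haI
        have hmem : (a, r a) ∈ I.toList.map (fun a => (a, r a)) :=
          List.mem_map.2 ⟨a, Finset.mem_toList.2 haI, rfl⟩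
        exact (hr a haI).2 (hh' _ hmem)
    have hpt : ∀ l : List (↥Gs × ℚ × ℚ), ∃ k : K, (F ⁻¹' b l).Nonempty → k ∈ F ⁻¹' b l := by
      intro l
      by_cases hne : (F ⁻¹' b l).Nonempty
      · exact ⟨hne.choose, fun _ => hne.choose_spec⟩
      · exact ⟨Classical.ofNonempty, fun h => absurd h hne⟩
    choose c hc using hpt
    have hX : #(↥Gs × ℚ × ℚ) < density K := by
      have he : #(↥Gs × ℚ × ℚ) = #(↥Gs) * ℵ₀ := by simp
      rw [he]
      exact lt_of_le_of_lt (Cardinal.mul_le_max _ _) (max_lt (max_lt hGs hbig) hbig)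
    have hDcard : #(T ∪ Set.range c : Set K) < density K := by
      refine lt_of_le_of_lt (Cardinal.mk_union_le _ _)
        (Cardinal.add_lt_of_lt (aleph0_le_density K) hT ?_)
      refine lt_of_le_of_lt Cardinal.mk_range_le ?_
      exact lt_of_le_of_lt (Cardinal.mk_list_le_max _) (max_lt hbig hX)
    have hdense : Dense (T ∪ Set.range c : Set K) := by
      rw [dense_iff_inter_open]
      intro U hU hUne
      obtain ⟨x, hx⟩ := hUne
      by_cases hxT : x ∈ closure T
      · obtain ⟨y, hy1, hy2⟩ := _root_.mem_closure_iff.1 hxT U hU hx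
        exact ⟨y, hy1, Or.inl hy2⟩
      · set U' : Set K := U ∩ (closure T)ᶜ with hU'
        have hU'open : IsOpen U' := hU.inter isClosed_closure.isOpen_compl
        have hxU' : x ∈ U' := ⟨hx, hxT⟩
        have hcpt : IsCompact (F '' U'ᶜ) := (hU'open.isClosed_compl.isCompact).image hFc
        have hFx : F x ∉ F '' U'ᶜ := by
          rintro ⟨y, hy1, hy2⟩
          by_cases hyx : y = x
          · subst hyx; exact hy1 hxU'
          · obtain ⟨g, hg, hgne⟩ := hcon y x hxT hyx
            exact hgne (congrFun hy2 ⟨g, hg⟩)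
        obtain ⟨l, hl1, hl2⟩ := hbasis (F '' U'ᶜ)ᶜ hcpt.isClosed.isOpen_compl (F x) hFx
        have hnon : (F ⁻¹' b l).Nonempty := ⟨x, hl1⟩
        have hcl := hc l hnon
        have hclU' : c l ∈ U' := by
          by_contra h'
          exact (hl2 hcl) ⟨c l, h', rfl⟩
        exact ⟨c l, hclU'.1, Or.inr ⟨l, rfl⟩⟩
    exact absurd hdense (not_dense_of_lt_density hDcard)
  obtain ⟨u, x, hxT, hux, hgux⟩ := hpair
  have hclosed : IsClosed (closure T ∪ {u}) := isClosed_closure.union isClosed_singleton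
  have hdisj : Disjoint (closure T ∪ {u}) {x} := by
    rw [Set.disjoint_singleton_right]
    rintro (h | h)
    · exact hxT h
    · exact hux (Set.mem_singleton_iff.1 h).symm
  obtain ⟨f, hf0, hf1, _⟩ :=
    exists_continuous_zero_one_of_isClosed hclosed isClosed_singleton hdisj
  have hfx : f x = 1 := by simpa using hf1 rfl
  have hfu : f u = 0 := by simpa using hf0 (Or.inr rfl)
  refine ⟨u, x, f, hxT, hux, hgux, hfx, hfu, ?_⟩
  intro y hy
  simpa using hf0 (Or.inl (subset_closure hy))

variable (K)

lemma step_exists (hbig : ℵ₀ < density K) (i : (density K).ord.ToType)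
    (prev : ∀ j, j < i → (K × K) × C(K, ℝ)) :
    ∃ p : (K × K) × C(K, ℝ),
      p.1.1 ≠ p.1.2 ∧ p.2 p.1.1 = 0 ∧ p.2 p.1.2 = 1 ∧
      (∀ j (h : j < i), (prev j h).2 p.1.1 = (prev j h).2 p.1.2) ∧
      (∀ y ∈ {k : K | ∃ j, ∃ h : j < i, k = (prev j h).1.1 ∨ k = (prev j h).1.2}, p.2 y = 0) ∧
      p.1.2 ∉ closure {k : K | ∃ j, ∃ h : j < i, k = (prev j h).1.1 ∨ k = (prev j h).1.2} := by
  set T : Set K := {k : K | ∃ j, ∃ h : j < i, k = (prev j h).1.1 ∨ k = (prev j h).1.2} with hTdef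
  have hT : #T < density K := by
    have hsub : T ⊆ Set.range (fun j : Set.Iio i => (prev j.1 j.2).1.1) ∪
        Set.range (fun j : Set.Iio i => (prev j.1 j.2).1.2) := by
      rintro k ⟨j, h, (rfl | rfl)⟩
      · exact Or.inl ⟨⟨j, h⟩, rfl⟩
      · exact Or.inr ⟨⟨j, h⟩, rfl⟩
    refine lt_of_le_of_lt (Cardinal.mk_le_mk_of_subset hsub)
      (lt_of_le_of_lt (Cardinal.mk_union_le _ _) (Cardinal.add_lt_of_lt (aleph0_le_density K)
        (lt_of_le_of_lt Cardinal.mk_range_le (Cardinal.mk_Iio_ord_toType i))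
        (lt_of_le_of_lt Cardinal.mk_range_le (Cardinal.mk_Iio_ord_toType i))))
  have hGs : #({g : C(K, ℝ) | ∃ j, ∃ h : j < i, g = (prev j h).2}) < density K := by
    have hsub : {g : C(K, ℝ) | ∃ j, ∃ h : j < i, g = (prev j h).2} ⊆
        Set.range (fun j : Set.Iio i => (prev j.1 j.2).2) := by
      rintro g ⟨j, h, rfl⟩
      exact ⟨⟨j, h⟩, rfl⟩
    exact lt_of_le_of_lt (Cardinal.mk_le_mk_of_subset hsub)
      (lt_of_le_of_lt Cardinal.mk_range_le (Cardinal.mk_Iio_ord_toType i))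
  obtain ⟨u, x, f, hxT, hux, hgux, hfx, hfu, hfT⟩ := key_step hbig T hT _ hGs
  refine ⟨((u, x), f), hux, hfu, hfx, ?_, hfT, hxT⟩
  intro j h
  exact hgux _ ⟨j, h, rfl⟩

/-- Any infinite compact Hausdorff space contains a sequence of pairwise disjoint
nonempty open sets. -/
lemma exists_disjoint_opens :
    ∃ U : ℕ → Set K, (∀ n, IsOpen (U n)) ∧ (∀ n, (U n).Nonempty) ∧
      ∀ m n, m ≠ n → Disjoint (U m) (U n) := by
  classical
  -- a non-isolated point exists
  have hz : ∃ z : K, ¬ IsOpen ({z} : Set K) := by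
    by_contra h
    push_neg at h
    obtain ⟨t, ht⟩ := isCompact_univ.elim_finite_subcover (fun x : K => ({x} : Set K))
      (fun x => h x) (by intro x _; exact Set.mem_iUnion.2 ⟨x, rfl⟩)
    have hfin : (Set.univ : Set K).Finite :=
      Set.Finite.subset (t.finite_toSet.biUnion fun x _ => Set.finite_singleton x) ht
    rw [Set.finite_univ_iff] at hfin
    haveI := hfin; exact not_finite K
  obtain ⟨z, hz⟩ := hz
  have hstep : ∀ O : {O : Set K // IsOpen O ∧ z ∈ O},
      ∃ p : Set K × {O : Set K // IsOpen O ∧ z ∈ O},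
        IsOpen p.1 ∧ p.1.Nonempty ∧ p.1 ⊆ O.1 ∧ p.2.1 ⊆ O.1 ∧ Disjoint p.1 p.2.1 := by
    rintro ⟨O, hO, hzO⟩
    have hy : ∃ y ∈ O, y ≠ z := by
      by_contra h
      push_neg at h
      have hOz : O = {z} := Set.eq_singleton_iff_unique_mem.2 ⟨hzO, h⟩
      exact hz (hOz ▸ hO)
    obtain ⟨y, hyO, hyz⟩ := hy
    obtain ⟨A, B, hA, hB, hyA, hzB, hAB⟩ := t2_separation hyz
    exact ⟨(O ∩ A, ⟨O ∩ B, hO.inter hB, hzO, hzB⟩), hO.inter hA, ⟨y, hyO, hyA⟩,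
      Set.inter_subset_left, Set.inter_subset_left,
      hAB.mono Set.inter_subset_right Set.inter_subset_right⟩
  choose st hst1 hst2 hst3 hst4 hst5 using hstep
  let chain : ℕ → {O : Set K // IsOpen O ∧ z ∈ O} :=
    fun n => Nat.rec (⟨Set.univ, isOpen_univ, Set.mem_univ z⟩ :
      {O : Set K // IsOpen O ∧ z ∈ O}) (fun _ O => (st O).2) n
  have hchain : ∀ n, chain (n + 1) = (st (chain n)).2 := fun n => rfl
  have hmono : ∀ m n, m ≤ n → (chain n).1 ⊆ (chain m).1 := by
    intro m n hmn
    induction n with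
    | zero => rw [Nat.le_zero.1 hmn]
    | succ k ih =>
      rcases Nat.lt_or_ge m (k + 1) with h | h
      · exact le_trans (by rw [hchain k]; exact hst4 (chain k)) (ih (Nat.lt_succ_iff.1 h))
      · rw [Nat.le_antisymm hmn h]
  refine ⟨fun n => (st (chain n)).1, fun n => hst1 _, fun n => hst2 _, ?_⟩
  have hdisj : ∀ m n, m < n → Disjoint (st (chain m)).1 (st (chain n)).1 := by
    intro m n hmn
    refine (hst5 (chain m)).mono_right ?_
    calc (st (chain n)).1 ⊆ (chain n).1 := hst3 _
      _ ⊆ (chain (m + 1)).1 := hmono _ _ hmn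
      _ = (st (chain m)).2.1 := by rw [hchain m]
  intro m n hmn
  rcases lt_or_gt_of_ne hmn with h | h
  · exact hdisj m n h
  · exact (hdisj n m h).symm

end Aux

/-- Every infinite compact Hausdorff space `K` has a bidiscrete system of
cardinality `d(K)`, the density of `K`. -/
theorem every_infinite_compactum_has_bidiscrete_system_of_density_size
    (K : Type u) [TopologicalSpace K] [CompactSpace K] [T2Space K] [Infinite K] :
    ∃ S : Set (K × K), IsBidiscrete S ∧ #S = density K := by
  classical
  rcases (aleph0_le_density K).lt_or_eq with hbig | heq
  · -- uncountable density: transfinite recursion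
    have wf : WellFounded ((· < ·) : (density K).ord.ToType → (density K).ord.ToType → Prop) :=
      wellFounded_lt
    have hgex : ∃ g : (density K).ord.ToType → (K × K) × C(K, ℝ),
        ∀ i, g i = (step_exists K hbig i (fun j (_ : j < i) => g j)).choose := by
      refine ⟨WellFounded.fix wf (fun i prev => (step_exists K hbig i prev).choose), fun i => ?_⟩
      exact WellFounded.fix_eq wf _ i
    obtain ⟨g, hgeq⟩ := hgex
    have spec : ∀ i,
        (g i).1.1 ≠ (g i).1.2 ∧ (g i).2 (g i).1.1 = 0 ∧ (g i).2 (g i).1.2 = 1 ∧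
        (∀ j (h : j < i), (g j).2 (g i).1.1 = (g j).2 (g i).1.2) ∧
        (∀ y ∈ {k : K | ∃ j, ∃ _ : j < i, k = (g j).1.1 ∨ k = (g j).1.2}, (g i).2 y = 0) ∧
        (g i).1.2 ∉ closure {k : K | ∃ j, ∃ _ : j < i, k = (g j).1.1 ∨ k = (g j).1.2} := by
      intro i
      have h := (step_exists K hbig i (fun j (_ : j < i) => g j)).choose_spec
      rw [← hgeq i] at h
      exact h
    have hne2 : ∀ i j, j < i → (g i).1 ≠ (g j).1 := by
      intro i j hji hEq
      exact (spec i).2.2.2.2.2 (subset_closure ⟨j, hji, Or.inr (congrArg Prod.snd hEq)⟩)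
    have hinj : Function.Injective (fun i : (density K).ord.ToType => (g i).1) := by
      intro i j hEq
      by_contra hne
      rcases lt_or_gt_of_ne hne with h | h
      · exact hne2 j i h (congrArg id hEq).symm
      · exact hne2 i j h (congrArg id hEq)
    refine ⟨Set.range (fun i => (g i).1), ?_, ?_⟩
    · have hex : ∀ p : ↥(Set.range fun i => (g i).1), ∃ i, (g i).1 = p.1 := fun p => p.2
      choose idx hidx using hex
      refine ⟨fun p => (g (idx p)).2, fun p => ?_⟩
      obtain ⟨h1, h2, h3, h4, h5, h6⟩ := spec (idx p)
      refine ⟨?_, ?_, ?_⟩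
      · rw [← hidx p]; exact h2
      · rw [← hidx p]; exact h3
      · intro q hqp
        have hne : idx q ≠ idx p := by
          intro h
          exact hqp (Subtype.ext (by rw [← hidx q, ← hidx p, h]))
        rcases lt_or_gt_of_ne hne with h | h
        · rw [← hidx q, h5 _ ⟨idx q, h, Or.inl rfl⟩, h5 _ ⟨idx q, h, Or.inr rfl⟩]
        · rw [← hidx q]
          exact (spec (idx q)).2.2.2.1 (idx p) h
    · rw [Cardinal.mk_range_eq _ hinj]
      exact Cardinal.mk_ord_toType (density K)
  · -- countable density: disjoint open sets construction
    obtain ⟨U, hUopen, hUne, hUdisj⟩ := exists_disjoint_opens (K := K)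
    set z : K := (hUne 0).choose with hzdef
    have hz : z ∈ U 0 := (hUne 0).choose_spec
    set b : ℕ → K := fun n => (hUne (n + 1)).choose with hbdef
    have hbU : ∀ n, b n ∈ U (n + 1) := fun n => (hUne (n + 1)).choose_spec
    have hfn : ∀ n : ℕ, ∃ f : C(K, ℝ), f (b n) = 1 ∧ ∀ y ∉ U (n + 1), f y = 0 := by
      intro n
      have hdisj : Disjoint ((U (n + 1))ᶜ : Set K) {b n} := by
        rw [Set.disjoint_singleton_right]
        exact fun h => h (hbU n)
      obtain ⟨f, hf0, hf1, _⟩ := exists_continuous_zero_one_of_isClosed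
        (hUopen (n + 1)).isClosed_compl isClosed_singleton hdisj
      exact ⟨f, by simpa using hf1 rfl, fun y hy => by simpa using hf0 hy⟩
    choose f hf1 hf0 using hfn
    have hbinj : Function.Injective b := by
      intro m n hmn
      by_contra hne
      have hd := hUdisj (m + 1) (n + 1) (fun h => hne (Nat.succ_injective h))
      exact (Set.disjoint_left.1 hd (hbU m)) (hmn ▸ hbU n)
    have hzU : ∀ n, z ∉ U (n + 1) := fun n =>
      Set.disjoint_left.1 (hUdisj 0 (n + 1) (by omega)) hz
    have hpinj : Function.Injective (fun n : ℕ => ((z, b n) : K × K)) := by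
      intro m n hmn
      exact hbinj (congrArg Prod.snd hmn)
    refine ⟨Set.range (fun n : ℕ => ((z, b n) : K × K)), ?_, ?_⟩
    · have hex : ∀ p : ↥(Set.range fun n : ℕ => ((z, b n) : K × K)),
        ∃ n, ((z, b n) : K × K) = p.1 := fun p => p.2
      choose idx hidx using hex
      refine ⟨fun p => f (idx p), fun p => ?_⟩
      refine ⟨?_, ?_, ?_⟩
      · rw [← hidx p]
        exact hf0 _ _ (hzU _)
      · rw [← hidx p]
        exact hf1 _
      · intro q hqp
        have hne : idx q ≠ idx p := by
          intro h
          exact hqp (Subtype.ext (by rw [← hidx q, ← hidx p, h]))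
        rw [← hidx q]
        have hb0 : f (idx p) (b (idx q)) = 0 := by
          refine hf0 _ _ ?_
          exact Set.disjoint_left.1 (hUdisj (idx q + 1) (idx p + 1)
            (fun h => hne (Nat.succ_injective h))) (hbU (idx q))
        have hz0 : f (idx p) z = 0 := hf0 _ _ (hzU _)
        simpa [hz0] using hb0.symm
    · refine le_antisymm ?_ ?_
      · rw [← heq]
        haveI := (Set.countable_range fun n : ℕ => ((z, b n) : K × K)).to_subtype
        exact Cardinal.mk_le_aleph0
      · rw [← heq]
        exact Cardinal.aleph0_le_mk_iff.2
          (Set.infinite_coe_iff.2 (Set.infinite_range_of_injective hpinj))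
end

section
/- Suppose X is a compact Hausdorff space and κ is an uncountable cardinal such that d(X) ≥ κ and every non-empty open subspace of X has weight ≥ κ. Then X has a bidiscrete system of cardinality κ. -/
open Cardinal Set TopologicalSpace Topology

universe u

/-- The weight of a topological space: the least cardinality of a base for the topology. -/
noncomputable def weight (X : Type u) [TopologicalSpace X] : Cardinal.{u} :=
  sInf {c : Cardinal.{u} |
    ∃ B : Set (Set X), TopologicalSpace.IsTopologicalBasis B ∧ #B = c}

lemma density_le_mk_of_dense {X : Type u} [TopologicalSpace X] {s : Set X} (h : Dense s) :
    density X ≤ #s := csInf_le' ⟨s, h, rfl⟩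

lemma weight_le_mk_basis {X : Type u} [TopologicalSpace X] {B : Set (Set X)}
    (h : TopologicalSpace.IsTopologicalBasis B) : weight X ≤ #B := csInf_le' ⟨B, h, rfl⟩

lemma weight_le_of_inducing {A ι : Type u} [TopologicalSpace A] {G : A → (ι → ℝ)}
    (hG : IsInducing G) : weight A ≤ max #ι ℵ₀ := by
  classical
  obtain ⟨B₀, hB₀c, -, hB₀⟩ := TopologicalSpace.exists_countable_basis ℝ
  have hBP := isTopologicalBasis_pi (X := fun _ : ι => ℝ) (fun _ => hB₀)
  have hbasis := hBP.isInducing hG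
  refine (weight_le_mk_basis hbasis).trans ?_
  refine (Cardinal.mk_image_le).trans ?_
  set BP := { S : Set (ι → ℝ) | ∃ (U : ∀ _ : ι, Set ℝ) (F : Finset ι),
      (∀ i, i ∈ F → U i ∈ B₀) ∧ S = (F : Set ι).pi U } with hBPdef
  let φ : List (ι × ↥B₀) → Set (ι → ℝ) := fun l => {g | ∀ p ∈ l, g p.1 ∈ (p.2 : Set ℝ)}
  have hsub : BP ⊆ Set.range φ := by
    rintro S ⟨U, F, hU, rfl⟩
    refine ⟨F.toList.attach.map (fun i => (i.1, ⟨U i.1, hU i.1 (Finset.mem_toList.1 i.2)⟩)), ?_⟩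
    ext g
    simp only [φ, Set.mem_setOf_eq, List.mem_map, List.mem_attach, true_and, Set.mem_pi]
    constructor
    · intro hg i hi
      exact hg (i, ⟨U i, hU i hi⟩) ⟨⟨i, Finset.mem_toList.2 hi⟩, rfl⟩
    · rintro hg p ⟨⟨i, hi⟩, rfl⟩
      exact hg i (Finset.mem_toList.1 hi)
  refine (Cardinal.mk_le_mk_of_subset hsub).trans ?_
  refine Cardinal.mk_range_le.trans ?_
  refine (Cardinal.mk_list_le_max _).trans ?_
  have h1 : #(ι × ↥B₀) ≤ max #ι ℵ₀ := by
    have hb : #↥B₀ ≤ ℵ₀ := Cardinal.mk_le_aleph0_iff.2 (Set.countable_coe_iff.2 hB₀c)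
    calc #(ι × ↥B₀) = Cardinal.lift.{0} #ι * Cardinal.lift.{u} #↥B₀ := Cardinal.mk_prod ι ↥B₀
      _ ≤ Cardinal.lift.{0} #ι * Cardinal.lift.{u} ℵ₀ :=
          mul_le_mul_right (Cardinal.lift_le.2 hb) _
      _ = #ι * ℵ₀ := by simp
      _ ≤ max (max #ι ℵ₀) ℵ₀ := Cardinal.mul_le_max _ _
      _ = max #ι ℵ₀ := by simp [max_assoc]
  simpa using max_le (le_max_right _ _) h1

/-- If `X` is a compact Hausdorff space, `κ` is an uncountable cardinal, `d(X) ≥ κ` and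
every non-empty open subspace of `X` has weight `≥ κ`, then `X` has a bidiscrete system
of cardinality `κ`. -/
theorem bidiscrete_of_density_ge_of_open_weight_ge
    (X : Type u) [TopologicalSpace X] [CompactSpace X] [T2Space X]
    (κ : Cardinal.{u}) (hκ : ℵ₀ < κ) (hd : κ ≤ density X)
    (hw : ∀ U : Set X, IsOpen U → U.Nonempty → κ ≤ weight U) :
    ∃ S : Set (X × X), IsBidiscrete S ∧ #S = κ := by
  classical
  set Good : Set ((X × X) × C(X, ℝ)) → Prop := fun T =>
    (∀ t ∈ T, t.2 t.1.1 = 0 ∧ t.2 t.1.2 = 1 ∧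
      ∀ s ∈ T, s.1 ≠ t.1 → t.2 s.1.1 = t.2 s.1.2) ∧ Set.InjOn Prod.fst T with hGooddef
  have key : ∀ T : Set ((X × X) × C(X, ℝ)), Good T → #T < κ →
      ∃ t ∉ T, Good (insert t T) := by
    intro T hT hTκ
    set E : Set X := (fun t : (X × X) × C(X, ℝ) => t.1.1) '' T ∪
      (fun t : (X × X) × C(X, ℝ) => t.1.2) '' T with hEdef
    have hmemE : ∀ t ∈ T, t.1.1 ∈ E ∧ t.1.2 ∈ E := fun t ht =>
      ⟨Set.mem_union_left _ (Set.mem_image_of_mem _ ht),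
       Set.mem_union_right _ (Set.mem_image_of_mem _ ht)⟩
    have hE : #E < κ := by
      refine (Cardinal.mk_union_le _ _).trans_lt ?_
      exact Cardinal.add_lt_of_lt hκ.le (Cardinal.mk_image_le.trans_lt hTκ)
        (Cardinal.mk_image_le.trans_lt hTκ)
    have hnd : ¬ Dense E := fun h =>
      ((hd.trans (density_le_mk_of_dense h)).trans_lt hE).false
    obtain ⟨x, hx⟩ : ((closure E)ᶜ).Nonempty := by
      rw [Set.nonempty_compl]
      exact fun h => hnd (dense_iff_closure_eq.2 h)
    have hUopen : IsOpen (closure E)ᶜ := isClosed_closure.isOpen_compl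
    obtain ⟨W, hWx, hWc, hWU⟩ := exists_mem_nhds_isClosed_subset (hUopen.mem_nhds hx)
    set V : Set X := interior W with hVdef
    have hVo : IsOpen V := isOpen_interior
    have hxV : x ∈ V := mem_interior_iff_mem_nhds.2 hWx
    have hclV : closure V ⊆ (closure E)ᶜ :=
      (closure_minimal interior_subset hWc).trans hWU
    have hpair : ∃ a ∈ closure V, ∃ b ∈ closure V, a ≠ b ∧ ∀ s ∈ T, s.2 a = s.2 b := by
      by_contra hcon
      push_neg at hcon
      haveI : CompactSpace ↥(closure V) :=
        isCompact_iff_compactSpace.1 (isClosed_closure.isCompact)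
      set G : ↥(closure V) → (↥T → ℝ) := fun a s => s.1.2 a.1 with hGdef
      have hGc : Continuous G :=
        continuous_pi fun s => s.1.2.continuous.comp continuous_subtype_val
      have hGi : Function.Injective G := by
        intro a b hab
        by_contra hne
        obtain ⟨s, hs, hsne⟩ := hcon a.1 a.2 b.1 b.2 (fun h => hne (Subtype.ext h))
        exact hsne (congrFun hab ⟨s, hs⟩)
      have hind : IsInducing (G ∘ Set.inclusion (subset_closure : V ⊆ closure V)) :=
        ((hGc.isClosedEmbedding hGi).isInducing).comp
          (IsEmbedding.inclusion subset_closure).isInducing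
      have h1 : weight ↥V ≤ max #↥T ℵ₀ := weight_le_of_inducing hind
      have h2 : κ ≤ weight ↥V := hw V hVo ⟨x, hxV⟩
      exact ((h2.trans h1).trans_lt (max_lt hTκ hκ)).false
    obtain ⟨a, ha, b, hb, hab, hfib⟩ := hpair
    have haU : a ∉ closure E := hclV ha
    have hbU : b ∉ closure E := hclV hb
    obtain ⟨f, hf0, hf1, -⟩ := exists_continuous_zero_one_of_isClosed
      (isClosed_closure.union isClosed_singleton) (isClosed_singleton (x := b))
      (Set.disjoint_singleton_right.2 (by
        rintro (h | h)
        · exact hbU h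
        · exact hab (Set.mem_singleton_iff.1 h).symm))
    refine ⟨((a, b), f), fun hmem => haU (subset_closure (hmemE _ hmem).1), ?_, ?_⟩
    · rintro t (rfl | ht)
      · refine ⟨hf0 (Set.mem_union_right _ rfl), hf1 rfl, ?_⟩
        rintro s (rfl | hs) hsne
        · exact absurd rfl hsne
        · rw [show f s.1.1 = 0 from hf0 (Set.mem_union_left _ (subset_closure (hmemE s hs).1)),
              show f s.1.2 = 0 from hf0 (Set.mem_union_left _ (subset_closure (hmemE s hs).2))]
      · obtain ⟨h0, h1, h2⟩ := hT.1 t ht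
        refine ⟨h0, h1, ?_⟩
        rintro s (rfl | hs) hsne
        · exact hfib t ht
        · exact h2 s hs hsne
    · rintro s (rfl | hs) t (rfl | ht) hst
      · rfl
      · have h' : a = t.1.1 := by rw [← hst]
        exact absurd (subset_closure (h' ▸ (hmemE t ht).1)) haU
      · have h' : a = s.1.1 := by rw [hst]
        exact absurd (subset_closure (h' ▸ (hmemE s hs).1)) haU
      · exact hT.2 hs ht hst
  have hchainstep : ∀ c ⊆ {T | Good T}, IsChain (· ⊆ ·) c →
      ∃ ub ∈ {T | Good T}, ∀ s ∈ c, s ⊆ ub := by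
    intro c hc hchain
    refine ⟨⋃₀ c, ⟨?_, ?_⟩, fun s hs => Set.subset_sUnion_of_mem hs⟩
    · rintro t ⟨A, hA, htA⟩
      obtain ⟨h0, h1, h2⟩ := (hc hA).1 t htA
      refine ⟨h0, h1, ?_⟩
      rintro s ⟨B, hB, hsB⟩ hsne
      rcases hchain.total hA hB with h | h
      · exact ((hc hB).1 t (h htA)).2.2 s hsB hsne
      · exact h2 s (h hsB) hsne
    · rintro s ⟨A, hA, hsA⟩ t ⟨B, hB, htB⟩ hst
      rcases hchain.total hA hB with h | h
      · exact (hc hB).2 (h hsA) htB hst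
      · exact (hc hA).2 hsA (h htB) hst
  obtain ⟨M, hM⟩ := zorn_subset {T | Good T} hchainstep
  have hMg : Good M := hM.1
  have hMκ : κ ≤ #M := by
    by_contra h
    push_neg at h
    obtain ⟨t, htM, hins⟩ := key M hMg h
    exact htM (hM.2 hins (Set.subset_insert _ _) (Set.mem_insert _ _))
  have himg : κ ≤ #(Prod.fst '' M) := by
    rwa [Cardinal.mk_image_eq_of_injOn _ _ hMg.2]
  obtain ⟨S, hSsub, hScard⟩ := Cardinal.le_mk_iff_exists_subset.1 himg
  refine ⟨S, ?_, hScard⟩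
  have hmem : ∀ p : ↥S, ∃ t, t ∈ M ∧ t.1 = (p : X × X) := by
    intro p
    obtain ⟨t, ht, h⟩ := hSsub p.2
    exact ⟨t, ht, h⟩
  refine ⟨fun p => (hmem p).choose.2, fun p => ?_⟩
  obtain ⟨ht, hfst⟩ := (hmem p).choose_spec
  obtain ⟨h0, h1, h2⟩ := hMg.1 _ ht
  rw [hfst] at h0 h1
  refine ⟨h0, h1, fun q hq => ?_⟩
  have hq' : (hmem q).choose.1 ≠ (hmem p).choose.1 := by
    rw [hfst, (hmem q).choose_spec.2]
    exact fun h => hq (Subtype.ext h)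
  have h3 := h2 _ (hmem q).choose_spec.1 hq'
  rwa [(hmem q).choose_spec.2] at h3
end

section
/- Suppose K is a compact Hausdorff space, I is an index set, and for each i ∈ I we have sets F_i ⊆ G_i ⊆ K such that the G_i are pairwise disjoint open sets, each F_i is closed, and S_i is a bidiscrete system in the subspace F_i. Then the union ⋃_{i ∈ I} S_i is a bidiscrete system in K. -/
universe u v

/-- Suppose `K` is a compact Hausdorff space and `F i ⊆ G i ⊆ K` for `i ∈ I` are such that
the `G i` are pairwise disjoint open sets, the `F i` are closed, and each `S i` is a
bidiscrete system in the subspace `F i`. Then the union `⋃ i, S i` (viewed as a set of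
pairs of points of `K`) is a bidiscrete system in `K`. -/
theorem union_bidiscrete_of_separated
    {K : Type u} [TopologicalSpace K] [CompactSpace K] [T2Space K]
    {I : Type v} (F G : I → Set K)
    (hFG : ∀ i, F i ⊆ G i)
    (hGopen : ∀ i, IsOpen (G i))
    (hGdisj : Pairwise (Function.onFun Disjoint G))
    (hFclosed : ∀ i, IsClosed (F i))
    (S : ∀ i, Set (↥(F i) × ↥(F i)))
    (hS : ∀ i, IsBidiscrete (S i)) :
    IsBidiscrete
      (⋃ i, (fun p : ↥(F i) × ↥(F i) => ((p.1 : K), (p.2 : K))) '' S i) := by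
  classical
  choose f hf using hS
  -- Urysohn functions: 1 on F i, 0 off G i
  have hU : ∀ i, ∃ g : C(K, ℝ), Set.EqOn g 0 (G i)ᶜ ∧ Set.EqOn g 1 (F i) := by
    intro i
    obtain ⟨g, h0, h1, -⟩ := exists_continuous_zero_one_of_isClosed
      (isClosed_compl_iff.mpr (hGopen i)) (hFclosed i)
      (Set.disjoint_left.mpr fun x hx hxF => hx (hFG i hxF))
    exact ⟨g, h0, h1⟩
  choose g hg0 hg1 using hU
  -- Tietze extensions
  have hT : ∀ i (s : ↥(S i)), ∃ e : C(K, ℝ), e.restrict (F i) = f i s :=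
    fun i s => ContinuousMap.exists_restrict_eq (hFclosed i) (f i s)
  choose e he using hT
  have heval : ∀ i (s : ↥(S i)) (x : ↥(F i)), e i s (x : K) = f i s x := by
    intro i s x
    have := congrFun (congrArg DFunLike.coe (he i s)) x
    simpa using this
  set T : Set (K × K) :=
    ⋃ i, (fun p : ↥(F i) × ↥(F i) => ((p.1 : K), (p.2 : K))) '' S i with hTdef
  -- pick index and preimage pair for each element of the union
  have hmem : ∀ u : ↥T, ∃ i, ∃ s : ↥(S i),
      (((s : ↥(F i) × ↥(F i)).1 : K), ((s : ↥(F i) × ↥(F i)).2 : K)) = (u : K × K) := by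
    rintro ⟨u, hu⟩
    rw [hTdef, Set.mem_iUnion] at hu
    obtain ⟨i, p, hp, hpe⟩ := hu
    exact ⟨i, ⟨p, hp⟩, hpe⟩
  choose idx sel hsel using hmem
  refine ⟨fun u => e (idx u) (sel u) * g (idx u), ?_⟩
  intro p
  have hp1 : (p : K × K).1 = ((sel p).1.1 : K) := by rw [← hsel p]
  have hp2 : (p : K × K).2 = ((sel p).1.2 : K) := by rw [← hsel p]
  obtain ⟨hf0, hf1, hfeq⟩ := hf (idx p) (sel p)
  refine ⟨?_, ?_, ?_⟩
  · rw [hp1]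
    simp [heval, hf0, hg1 (idx p) (sel p).1.1.2]
  · rw [hp2]
    simp [heval, hf1, hg1 (idx p) (sel p).1.2.2]
  · intro q hq
    obtain ⟨j, t, ht⟩ : ∃ j, ∃ t : ↥(S j),
        (((t : ↥(F j) × ↥(F j)).1 : K), ((t : ↥(F j) × ↥(F j)).2 : K)) = (q : K × K) :=
      ⟨idx q, sel q, hsel q⟩
    have hq1 : (q : K × K).1 = ((t : ↥(F j) × ↥(F j)).1 : K) := by rw [← ht]
    have hq2 : (q : K × K).2 = ((t : ↥(F j) × ↥(F j)).2 : K) := by rw [← ht]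
    by_cases hij : j = idx p
    · -- same index: use bidiscreteness within S i
      subst hij
      have hne : t ≠ sel p := by
        intro h
        apply hq
        apply Subtype.ext
        rw [← ht, ← hsel p, h]
      have := hfeq t hne
      have hgt1 : g (idx p) ((t : ↥(F (idx p)) × ↥(F (idx p))).1 : K) = 1 := by
        simpa using hg1 (idx p) (t : ↥(F (idx p)) × ↥(F (idx p))).1.2
      have hgt2 : g (idx p) ((t : ↥(F (idx p)) × ↥(F (idx p))).2 : K) = 1 := by
        simpa using hg1 (idx p) (t : ↥(F (idx p)) × ↥(F (idx p))).2.2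
      rw [hq1, hq2]
      simp only [ContinuousMap.mul_apply, heval, hgt1, hgt2, mul_one]
      exact this
    · -- different indices: the Urysohn factor vanishes
      have hd := hGdisj hij
      have h1 : ((t : ↥(F j) × ↥(F j)).1 : K) ∈ (G (idx p))ᶜ :=
        fun hx => (Set.disjoint_left.mp hd (hFG _ (t : ↥(F j) × ↥(F j)).1.2)) hx
      have h2 : ((t : ↥(F j) × ↥(F j)).2 : K) ∈ (G (idx p))ᶜ :=
        fun hx => (Set.disjoint_left.mp hd (hFG _ (t : ↥(F j) × ↥(F j)).2.2)) hx
      rw [hq1, hq2]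
      simp [hg0 (idx p) h1, hg0 (idx p) h2]
end

section
/- If a compact Hausdorff space K has a discrete subspace of cardinality κ ≥ ℵ₀, then K has a bidiscrete system of cardinality κ. -/
open Cardinal

universe u

/-- If a compact Hausdorff space `K` has a discrete subspace of cardinality `κ ≥ ℵ₀`,
then `K` has a bidiscrete system of cardinality `κ`. -/
theorem bidiscrete_of_discrete_subspace
    {K : Type u} [TopologicalSpace K] [CompactSpace K] [T2Space K]
    (D : Set K) (hD : DiscreteTopology D)
    (κ : Cardinal.{u}) (hκ : ℵ₀ ≤ κ) (hcard : #D = κ) :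
    ∃ S : Set (K × K), IsBidiscrete S ∧ #S = κ := by
  have hne : D.Nonempty := by
    rw [Set.nonempty_iff_ne_empty]
    rintro rfl
    simp only [Cardinal.mk_eq_zero] at hcard
    rw [← hcard] at hκ
    exact (Cardinal.aleph0_pos.not_ge hκ).elim
  obtain ⟨z, hz⟩ := hne
  have key : ∀ d ∈ D \ {z}, ∃ f : C(K, ℝ),
      f z = 0 ∧ f d = 1 ∧ ∀ e ∈ D, e ≠ d → f e = 0 := by
    rintro d ⟨hdD, hdz⟩
    have hopen : IsOpen ({⟨d, hdD⟩} : Set D) := isOpen_discrete _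
    obtain ⟨U, hU, hUD⟩ := isOpen_induced_iff.mp hopen
    have hdU : d ∈ U := by
      have : (⟨d, hdD⟩ : D) ∈ (Subtype.val ⁻¹' U : Set D) := by
        rw [hUD]; rfl
      exact this
    have honly : ∀ e ∈ D, e ∈ U → e = d := by
      intro e heD heU
      have : (⟨e, heD⟩ : D) ∈ ({⟨d, hdD⟩} : Set D) := by
        rw [← hUD]; exact heU
      exact congrArg Subtype.val (Set.mem_singleton_iff.mp this)
    obtain ⟨f, hf0, hf1, -⟩ := exists_continuous_zero_one_of_isClosed
      (isClosed_compl_iff.mpr hU) (isClosed_singleton (x := d))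
      (by
        rw [Set.disjoint_singleton_right]
        simpa using hdU)
    refine ⟨f, ?_, ?_, ?_⟩
    · have : z ∉ U := fun h => hdz (honly z hz h).symm
      simpa using hf0 this
    · simpa using hf1 rfl
    · intro e heD hed
      have : e ∉ U := fun h => hed (honly e heD h)
      simpa using hf0 this
  choose! g hg0 hg1 hge using key
  have hinj : Function.Injective (fun d : K => ((z, d) : K × K)) := by
    intro a b h
    exact congrArg Prod.snd h
  refine ⟨(fun d : K => ((z, d) : K × K)) '' (D \ {z}), ?_, ?_⟩
  · refine ⟨fun p => g (p : K × K).2, ?_⟩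
    rintro ⟨⟨a, b⟩, hp⟩
    obtain ⟨d, hd, hde⟩ := hp
    obtain ⟨rfl, rfl⟩ : z = a ∧ d = b := ⟨congrArg Prod.fst hde, congrArg Prod.snd hde⟩
    refine ⟨hg0 d hd, hg1 d hd, ?_⟩
    rintro ⟨⟨a', b'⟩, hq⟩ hqp
    obtain ⟨d', hd', hde'⟩ := hq
    obtain ⟨rfl, rfl⟩ : z = a' ∧ d' = b' :=
      ⟨congrArg Prod.fst hde', congrArg Prod.snd hde'⟩
    have hdd : d' ≠ d := by
      intro h
      exact hqp (by simp [h])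
    simp only
    rw [hg0 d hd, hge d hd d' hd'.1 hdd]
  · rw [Cardinal.mk_image_eq hinj]
    have h1 : #(D \ {z} : Set K) + #({z} : Set K) = #D :=
      Cardinal.mk_diff_add_mk (Set.singleton_subset_iff.mpr hz)
    rw [Cardinal.mk_singleton, hcard] at h1
    have hinf : ℵ₀ ≤ #(D \ {z} : Set K) := by
      by_contra h
      push_neg at h
      have : #(D \ {z} : Set K) + 1 < ℵ₀ := Cardinal.add_lt_aleph0 h Cardinal.one_lt_aleph0
      rw [h1] at this
      exact (this.not_ge hκ).elim
    rw [← h1, Cardinal.add_one_eq hinf]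
end

section
/- For any compact Hausdorff space K, the hereditary density hd(K) equals the supremum of the densities d(C) over all closed subspaces C ⊆ K. -/
open Cardinal

universe u

/-- The hereditary density of a topological space: the supremum of the densities of
all its subspaces. -/
noncomputable def hereditaryDensity (X : Type u) [TopologicalSpace X] : Cardinal.{u} :=
  ⨆ Y : Set X, density Y

namespace HDAux

open Set

theorem exists_dense_card (X : Type u) [TopologicalSpace X] :
    ∃ s : Set X, Dense s ∧ #s = density X := by
  have h : {c : Cardinal.{u} | ∃ s : Set X, Dense s ∧ #s = c}.Nonempty :=
    ⟨#(univ : Set X), ⟨univ, dense_univ, rfl⟩⟩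
  exact csInf_mem h

theorem density_le_card {X : Type u} [TopologicalSpace X] {s : Set X} (hs : Dense s) :
    density X ≤ #s :=
  csInf_le' ⟨s, hs, rfl⟩

variable {K : Type u} [TopologicalSpace K]

theorem dense_preimage {Y A : Set K} (hAY : A ⊆ Y) (h : Y ⊆ closure A) :
    Dense ((↑) ⁻¹' A : Set Y) := by
  intro z
  rw [closure_subtype]
  have himg : ((↑) : Y → K) '' (((↑) : Y → K) ⁻¹' A) = A := by
    rw [Set.image_preimage_eq_inter_range, Subtype.range_coe]
    exact inter_eq_self_of_subset_left hAY
  rw [himg]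
  exact h z.2

theorem subset_closure_image_of_dense {F : Set K} {s : Set F} (hs : Dense s) :
    F ⊆ closure (((↑) : F → K) '' s) := by
  intro z hz
  have := hs ⟨z, hz⟩
  rwa [closure_subtype] at this

theorem mem_closure_diff {S W : Set K} {x : K} (h1 : x ∈ closure S) (h2 : x ∉ closure W) :
    x ∈ closure (S \ W) := by
  have hsub : S ⊆ (S \ W) ∪ W := by
    intro z hz
    by_cases hzW : z ∈ W
    · exact Or.inr hzW
    · exact Or.inl ⟨hz, hzW⟩
  have h3 := closure_mono hsub h1
  rw [closure_union] at h3
  rcases h3 with h | h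
  · exact h
  · exact absurd h h2

variable [CompactSpace K] [T2Space K]

theorem exists_open_sep {Z : Set K} {x : K} (hZ : IsClosed Z) (hx : x ∉ Z) :
    ∃ W : Set K, IsOpen W ∧ Z ⊆ W ∧ x ∉ closure W := by
  obtain ⟨V, hVn, hVc, hVs⟩ := exists_mem_nhds_isClosed_subset (hZ.isOpen_compl.mem_nhds hx)
  refine ⟨Vᶜ, hVc.isOpen_compl, ?_, ?_⟩
  · intro z hz hzV
    exact hVs hzV hz
  · intro hcl
    obtain ⟨z, hz1, hz2⟩ := mem_closure_iff.1 hcl (interior V) isOpen_interior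
      (mem_interior_iff_mem_nhds.2 hVn)
    exact hz2 (interior_subset hz1)

/-- The "goodness" predicate for one step of the transfinite construction of a
free sequence. -/
def GoodP (C : Set K) (x : K) {I : Type u} [LT I] (i : I)
    (prev : ∀ j : I, j < i → K × Set K) (p : K × Set K) : Prop :=
  IsOpen p.2 ∧ (∀ j (h : j < i), (prev j h).2 ⊆ p.2) ∧
    closure {y | ∃ j, ∃ h : j < i, (prev j h).1 = y} ⊆ p.2 ∧
    x ∈ closure (C \ p.2) ∧ p.1 ∈ C ∧ p.1 ∉ p.2

open Classical in
/-- One step of the construction. -/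
noncomputable def FP (C : Set K) (x : K) {I : Type u} [LT I] (i : I)
    (prev : ∀ j : I, j < i → K × Set K) : K × Set K :=
  if h : ∃ p, GoodP C x i prev p then h.choose else (x, ∅)

theorem kappaClosed_isClosed {κ : Cardinal.{u}} (hκ : ℵ₀ ≤ κ)
    (hcl : ∀ G : Set K, IsClosed G → density G ≤ κ)
    {C : Set K} (hC : ∀ B : Set K, B ⊆ C → #B ≤ κ → closure B ⊆ C)
    {x : K} (hx : x ∈ closure C) : x ∈ C := by
  by_contra hxC
  set I := (Order.succ κ).ord.ToType with hIdef
  have hI : #I = Order.succ κ := mk_ord_toType _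
  have hIio : ∀ i : I, #(Iio i) ≤ κ := fun i => Order.lt_succ_iff.1 (mk_Iio_ord_toType i)
  have wf : WellFounded ((· < ·) : I → I → Prop) := wellFounded_lt
  set f : I → K × Set K := wf.fix (FP C x) with hfdef
  have hfeq : ∀ i : I, f i = FP C x i fun j _ => f j := fun i => wf.fix_eq (FP C x) i
  have main : ∀ i : I, GoodP C x i (fun j _ => f j) (f i) := by
    intro i
    induction i using WellFounded.induction wf with
    | _ i IH =>
      have hUopen : ∀ j : Iio i, IsOpen (f j).2 := fun j => (IH j j.2).1
      have hUmono : ∀ j j' : Iio i, (j : I) < (j' : I) → (f j).2 ⊆ (f j').2 :=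
        fun j j' h => (IH j' j'.2).2.1 j h
      have hUmono' : ∀ j j' : Iio i, (j : I) ≤ (j' : I) → (f j).2 ⊆ (f j').2 := by
        intro j j' h
        rcases h.lt_or_eq with h | h
        · exact hUmono j j' h
        · have : (j : Iio i) = j' := Subtype.ext h
          rw [this]
      have hUx : ∀ j : Iio i, x ∈ closure (C \ (f j).2) := fun j => (IH j j.2).2.2.2.1
      -- Claim A: x remains in the closure of C minus the union of the previous open sets
      have claimA : x ∈ closure (C \ ⋃ j : Iio i, (f (j : I)).2) := by
        by_contra hnot
        rw [mem_closure_iff] at hnot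
        push_neg at hnot
        obtain ⟨o, ho, hxo, hoe⟩ := hnot
        rcases isEmpty_or_nonempty (Iio i) with hemp | hne
        · rw [iUnion_of_empty, diff_empty] at hoe
          obtain ⟨z, hz⟩ := mem_closure_iff.1 hx o ho hxo
          rw [hoe] at hz
          exact hz
        · obtain ⟨V, hVn, hVc, hVo⟩ := exists_mem_nhds_isClosed_subset (ho.mem_nhds hxo)
          have hpick : ∀ j : Iio i, ∃ z, z ∈ interior V ∧ z ∈ C \ (f (j : I)).2 := by
            intro j
            obtain ⟨z, hz1, hz2⟩ := mem_closure_iff.1 (hUx j) (interior V) isOpen_interior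
              (mem_interior_iff_mem_nhds.2 hVn)
            exact ⟨z, hz1, hz2⟩
          choose y hy1 hy2 using hpick
          have hBC : range y ⊆ C := by
            rintro _ ⟨j, rfl⟩; exact (hy2 j).1
          have hBcard : #(range y) ≤ κ := le_trans mk_range_le (hIio i)
          have hclB_C : closure (range y) ⊆ C := hC _ hBC hBcard
          have hclB_V : closure (range y) ⊆ V := by
            refine closure_minimal ?_ hVc
            rintro _ ⟨j, rfl⟩; exact interior_subset (hy1 j)
          have hcover : closure (range y) ⊆ ⋃ j : Iio i, (f (j : I)).2 := by
            intro z hz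
            by_contra hzU
            have : z ∈ o ∩ (C \ ⋃ j : Iio i, (f (j : I)).2) :=
              ⟨hVo (hclB_V hz), hclB_C hz, hzU⟩
            rw [hoe] at this
            exact this
          have hdir : Directed (· ⊆ ·) (fun j : Iio i => (f (j : I)).2) := by
            intro j j'
            rcases le_total (j : I) (j' : I) with h | h
            · exact ⟨j', hUmono' j j' h, subset_rfl⟩
            · exact ⟨j, subset_rfl, hUmono' j' j h⟩
          obtain ⟨j0, hj0⟩ := (isClosed_closure.isCompact).elim_directed_cover
            (fun j : Iio i => (f (j : I)).2) hUopen hcover hdir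
          exact (hy2 j0).2 (hj0 (subset_closure (mem_range_self j0)))
      -- the set of previously chosen points
      have hPr : {y | ∃ j, ∃ h : j < i, (f j).1 = y} = range (fun j : Iio i => (f (j : I)).1) := by
        ext y
        constructor
        · rintro ⟨j, hj, rfl⟩; exact ⟨⟨j, hj⟩, rfl⟩
        · rintro ⟨j, rfl⟩; exact ⟨j, j.2, rfl⟩
      have hPC : {y | ∃ j, ∃ h : j < i, (f j).1 = y} ⊆ C := by
        rintro _ ⟨j, hj, rfl⟩
        exact (IH j hj).2.2.2.2.1
      have hPcard : #({y | ∃ j, ∃ h : j < i, (f j).1 = y} : Set K) ≤ κ := by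
        rw [hPr]
        exact le_trans mk_range_le (hIio i)
      have hZC : closure {y | ∃ j, ∃ h : j < i, (f j).1 = y} ⊆ C := hC _ hPC hPcard
      have hxZ : x ∉ closure {y | ∃ j, ∃ h : j < i, (f j).1 = y} := fun h => hxC (hZC h)
      obtain ⟨W, hWo, hZW, hxW⟩ := exists_open_sep isClosed_closure hxZ
      have hxcl : x ∈ closure (C \ ((⋃ j : Iio i, (f (j : I)).2) ∪ W)) := by
        have h1 := mem_closure_diff claimA hxW
        rwa [diff_diff] at h1
      have hnonempty : (C \ ((⋃ j : Iio i, (f (j : I)).2) ∪ W)).Nonempty := by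
        by_contra h
        rw [not_nonempty_iff_eq_empty] at h
        rw [h, closure_empty] at hxcl
        exact hxcl
      obtain ⟨xi, hxi⟩ := hnonempty
      have hex : ∃ p, GoodP C x i (fun j (_ : j < i) => f j) p := by
        refine ⟨(xi, (⋃ j : Iio i, (f (j : I)).2) ∪ W),
          (isOpen_iUnion hUopen).union hWo, ?_, ?_, hxcl, hxi.1, hxi.2⟩
        · intro j h
          exact (subset_iUnion (fun j : Iio i => (f (j : I)).2) ⟨j, h⟩).trans subset_union_left
        · exact hZW.trans subset_union_right
      have h5 : f i = hex.choose := by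
        rw [hfeq i]
        exact dif_pos hex
      rw [h5]
      exact hex.choose_spec
  -- Now derive the contradiction: the closure of the range of the free sequence is a
  -- closed set all of whose dense subsets have cardinality > κ.
  set xs : I → K := fun i => (f i).1 with hxsdef
  set Us : I → Set K := fun i => (f i).2 with hUsdef
  have hmono : ∀ {j i : I}, j < i → Us j ⊆ Us i := fun {j i} h => (main i).2.1 j h
  have hclpts : ∀ i : I, closure (xs '' Iio i) ⊆ Us i := by
    intro i
    have h3 := (main i).2.2.1
    have heq : {y | ∃ j, ∃ h : j < i, (f j).1 = y} = xs '' Iio i := by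
      ext y
      constructor
      · rintro ⟨j, hj, rfl⟩; exact ⟨j, hj, rfl⟩
      · rintro ⟨j, hj, rfl⟩; exact ⟨j, hj, rfl⟩
    rwa [heq] at h3
  have hxsC : ∀ i, xs i ∈ C := fun i => (main i).2.2.2.2.1
  have hxsU : ∀ i, xs i ∉ Us i := fun i => (main i).2.2.2.2.2
  set L := range xs with hLdef
  obtain ⟨s, hsd, hsc⟩ := exists_dense_card (closure L)
  set D := ((↑) : closure L → K) '' s with hDdef
  have hDcard : #D ≤ κ := le_trans mk_image_le (le_of_eq hsc |>.trans (hcl _ isClosed_closure))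
  have hDsub : closure L ⊆ closure D := subset_closure_image_of_dense hsd
  have hDL : D ⊆ closure L := Subtype.coe_image_subset _ _
  -- every element has a successor
  have hnext : ∀ i : I, {j : I | i < j}.Nonempty := by
    intro i
    by_contra h
    rw [not_nonempty_iff_eq_empty] at h
    have huniv : (univ : Set I) ⊆ insert i (Iio i) := by
      intro j _
      rcases lt_trichotomy j i with hj | hj | hj
      · exact Or.inr hj
      · exact Or.inl hj
      · exfalso
        have hmem : j ∈ {j : I | i < j} := hj
        rw [h] at hmem
        exact hmem
    have hcard : #I ≤ κ := by
      calc #I = #(univ : Set I) := mk_univ.symm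
        _ ≤ #(insert i (Iio i) : Set I) := mk_le_mk_of_subset huniv
        _ ≤ #(Iio i) + 1 := mk_insert_le
        _ ≤ κ + 1 := add_le_add_left (hIio i) 1
        _ = κ := by
            rw [add_one_eq hκ]
    rw [hI] at hcard
    exact absurd hcard (Order.lt_succ κ).not_ge
  set σ : I → I := fun i => wf.min {j : I | i < j} (hnext i) with hσdef
  have hσgt : ∀ i, i < σ i := fun i => wf.min_mem _ (hnext i)
  have hσle : ∀ i j, i < j → σ i ≤ j := fun i j hj => not_lt.1 (wf.not_lt_min _ hj)
  have hxR : ∀ i : I, xs i ∉ closure (xs '' Iio i) ∪ closure (xs '' Ioi i) := by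
    intro i
    rintro (h | h)
    · exact hxsU i (hclpts i h)
    · have hsub : xs '' Ioi i ⊆ (Us (σ i))ᶜ := by
        rintro _ ⟨j, hj, rfl⟩
        intro hmem
        rcases (hσle i j hj).lt_or_eq with hlt | heq
        · exact hxsU j (hmono hlt hmem)
        · exact hxsU j (heq ▸ hmem)
      have hcl2 : closure (xs '' Ioi i) ⊆ (Us (σ i))ᶜ :=
        closure_minimal hsub ((main (σ i)).1.isClosed_compl)
      have hin : xs i ∈ Us (σ i) := hclpts (σ i) (subset_closure ⟨i, hσgt i, rfl⟩)
      exact hcl2 h hin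
  have hpick : ∀ i : I, ∃ d, d ∈ D ∧ d ∉ closure (xs '' Iio i) ∪ closure (xs '' Ioi i) := by
    intro i
    have hopen : IsOpen (closure (xs '' Iio i) ∪ closure (xs '' Ioi i))ᶜ :=
      (isClosed_closure.union isClosed_closure).isOpen_compl
    have hxsF : xs i ∈ closure D := hDsub (subset_closure (mem_range_self i))
    obtain ⟨d, hd1, hd2⟩ := mem_closure_iff.1 hxsF _ hopen (hxR i)
    exact ⟨d, hd2, hd1⟩
  choose d hdD hdR using hpick
  have key : ∀ a b : I, a < b → d a = d b → False := by
    intro a b hab hd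
    have hsplit : L ⊆ xs '' Iio b ∪ xs '' Ioi a := by
      rintro _ ⟨j, rfl⟩
      rcases lt_or_ge j b with h | h
      · exact Or.inl ⟨j, h, rfl⟩
      · exact Or.inr ⟨j, lt_of_lt_of_le hab h, rfl⟩
    have hdaL : d a ∈ closure L := hDL (hdD a)
    have hmem : d a ∈ closure (xs '' Iio b) ∪ closure (xs '' Ioi a) := by
      have := closure_mono hsplit hdaL
      rwa [closure_union] at this
    rcases hmem with h | h
    · exact hdR b (Or.inl (hd ▸ h))
    · exact hdR a (Or.inr h)
  have hninj : ¬ Function.Injective (fun i : I => (⟨d i, hdD i⟩ : D)) := by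
    intro hinj
    have h1 := mk_le_of_injective hinj
    rw [hI] at h1
    exact absurd (h1.trans hDcard) (Order.lt_succ κ).not_ge
  rw [Function.not_injective_iff] at hninj
  obtain ⟨i, i', heq, hne'⟩ := hninj
  have heqd : d i = d i' := congrArg Subtype.val heq
  rcases hne'.lt_or_gt with h | h
  · exact key i i' h heqd
  · exact key i' i h heqd.symm

theorem density_le_of_closed_le {κ : Cardinal.{u}} (hκ : ℵ₀ ≤ κ)
    (hcl : ∀ G : Set K, IsClosed G → density G ≤ κ) (Y : Set K) :
    density Y ≤ κ := by
  have tight : ∀ z ∈ closure Y, ∃ B : Set K, B ⊆ Y ∧ #B ≤ κ ∧ z ∈ closure B := by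
    intro z hz
    by_contra hcon
    push_neg at hcon
    set C : Set K := ⋃ B : {B : Set K // B ⊆ Y ∧ #B ≤ κ}, closure (B : Set K) with hCdef
    have hYC : Y ⊆ C := by
      intro b hb
      refine mem_iUnion.2 ⟨⟨{b}, singleton_subset_iff.2 hb, ?_⟩, subset_closure rfl⟩
      rw [mk_singleton]
      exact le_trans one_le_aleph0 hκ
    have hCk : ∀ B : Set K, B ⊆ C → #B ≤ κ → closure B ⊆ C := by
      intro B hBC hBκ
      rcases isEmpty_or_nonempty B with he | hne
      · have hB0 : B = ∅ := isEmpty_coe_sort.1 he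
        rw [hB0, closure_empty]
        exact empty_subset _
      · have hch : ∀ b : B, ∃ T : {B' : Set K // B' ⊆ Y ∧ #B' ≤ κ},
            (b : K) ∈ closure (T : Set K) := fun b => mem_iUnion.1 (hBC b.2)
        choose T hT using hch
        have hBuY : (⋃ b : B, (T b : Set K)) ⊆ Y := iUnion_subset fun b => (T b).2.1
        have hBuκ : #(⋃ b : B, (T b : Set K)) ≤ κ := by
          refine le_trans (mk_iUnion_le _) ?_
          refine le_trans (mul_le_mul' hBκ (ciSup_le' fun b => (T b).2.2)) ?_
          rw [mul_eq_self hκ]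
        have hBclBu : B ⊆ closure (⋃ b : B, (T b : Set K)) := fun b hb =>
          closure_mono (subset_iUnion (fun b : B => (T b : Set K)) ⟨b, hb⟩) (hT ⟨b, hb⟩)
        have hcc : closure B ⊆ closure (⋃ b : B, (T b : Set K)) :=
          closure_minimal hBclBu isClosed_closure
        refine hcc.trans ?_
        intro w hw
        exact mem_iUnion.2 ⟨⟨_, hBuY, hBuκ⟩, hw⟩
    have hzC : z ∈ closure C := closure_mono hYC hz
    have hzC' : z ∈ C := kappaClosed_isClosed hκ hcl hCk hzC
    obtain ⟨B, hB⟩ := mem_iUnion.1 hzC'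
    exact hcon B B.2.1 B.2.2 hB
  obtain ⟨s, hsd, hsc⟩ := exists_dense_card (closure Y)
  set D := ((↑) : closure Y → K) '' s with hDdef
  have hDcl : D ⊆ closure Y := Subtype.coe_image_subset _ _
  have hDcard : #D ≤ κ := le_trans mk_image_le (le_of_eq hsc |>.trans (hcl _ isClosed_closure))
  have hYD : closure Y ⊆ closure D := subset_closure_image_of_dense hsd
  rcases isEmpty_or_nonempty D with he | hne
  · have hD0 : D = ∅ := isEmpty_coe_sort.1 he
    rw [hD0, closure_empty] at hYD
    have hY0 : Y = ∅ := eq_empty_of_subset_empty (subset_closure.trans hYD)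
    have hde : Dense (∅ : Set Y) := by
      rintro ⟨y, hy⟩
      rw [hY0] at hy
      exact absurd hy (notMem_empty y)
    refine le_trans (density_le_card hde) ?_
    simp
  · have hch : ∀ dd : D, ∃ B : Set K, B ⊆ Y ∧ #B ≤ κ ∧ (dd : K) ∈ closure B :=
      fun dd => tight dd (hDcl dd.2)
    choose Bf hBf1 hBf2 hBf3 using hch
    have hEY : (⋃ dd : D, Bf dd) ⊆ Y := iUnion_subset hBf1
    have hEcard : #(⋃ dd : D, Bf dd) ≤ κ := by
      refine le_trans (mk_iUnion_le _) ?_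
      refine le_trans (mul_le_mul' hDcard (ciSup_le' hBf2)) ?_
      rw [mul_eq_self hκ]
    have hDE : D ⊆ closure (⋃ dd : D, Bf dd) := fun w hw =>
      closure_mono (subset_iUnion Bf ⟨w, hw⟩) (hBf3 ⟨w, hw⟩)
    have hYE : Y ⊆ closure (⋃ dd : D, Bf dd) :=
      (subset_closure.trans hYD).trans (closure_minimal hDE isClosed_closure)
    have hdense : Dense ((↑) ⁻¹' (⋃ dd : D, Bf dd) : Set Y) := dense_preimage hEY hYE
    refine le_trans (density_le_card hdense) ?_
    exact le_trans (mk_preimage_of_injective _ _ Subtype.coe_injective) hEcard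

end HDAux

/-- For a compact Hausdorff space `K`, the hereditary density `hd(K)` equals the supremum
of the densities `d(C)` over all closed subspaces `C ⊆ K`. -/
theorem hereditaryDensity_eq_sup_density_closed
    (K : Type u) [TopologicalSpace K] [CompactSpace K] [T2Space K] :
    hereditaryDensity K = ⨆ C : {C : Set K // IsClosed C}, density (C : Set K) := by
  apply le_antisymm
  · rw [hereditaryDensity]
    refine ciSup_le' fun Y => ?_
    rcases finite_or_infinite K with hfin | hinf
    · have hYc : IsClosed Y := Y.toFinite.isClosed
      exact le_ciSup (Cardinal.bddAbove_range _) (⟨Y, hYc⟩ : {C : Set K // IsClosed C})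
    · have hκ : ℵ₀ ≤ ⨆ C : {C : Set K // IsClosed C}, density (C : Set K) := by
        have h1 : ℵ₀ ≤ density (Set.univ : Set K) := by
          obtain ⟨s, hsd, hsc⟩ := HDAux.exists_dense_card (Set.univ : Set K)
          rw [← hsc]
          by_contra hlt
          push_neg at hlt
          have hsfin : s.Finite := Cardinal.lt_aleph0_iff_set_finite.1 hlt
          have hclosed : IsClosed s := hsfin.isClosed
          have hseq : s = Set.univ := by
            rw [← hclosed.closure_eq]
            exact hsd.closure_eq
          have hfin1 : Finite ↥(Set.univ : Set K) := by
            rw [hseq] at hsfin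
            exact Set.finite_univ_iff.1 hsfin
          have : Finite K := Finite.of_equiv _ (Equiv.Set.univ K)
          exact not_finite K
        exact le_trans h1 (le_ciSup (f := fun C : {C : Set K // IsClosed C} => density (C : Set K)) (Cardinal.bddAbove_range _) ⟨Set.univ, isClosed_univ⟩)
      exact HDAux.density_le_of_closed_le hκ
        (fun G hG => le_ciSup (f := fun C : {C : Set K // IsClosed C} => density (C : Set K)) (Cardinal.bddAbove_range _) ⟨G, hG⟩) Y
  · refine ciSup_le' fun C => ?_
    rw [hereditaryDensity]
    exact le_ciSup (Cardinal.bddAbove_range _) (C : Set K)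
end

section
/- If K is a compact Hausdorff space with hd(K) ≥ λ⁺ for some infinite cardinal λ, then K has a bidiscrete system of cardinality λ⁺. -/
open Cardinal

universe u

open Set Function

/-- A transfinite-recursion principle for producing a total function each of whose values
satisfies a predicate depending only on earlier values. -/
theorem wf_rec_exists {ι : Type v} [LT ι] [IsWellFounded ι (· < ·)] {α : Type w} [Nonempty α]
    (Q : ι → α → (ι → α) → Prop)
    (hQ : ∀ i a g g', (∀ j, j < i → g j = g' j) → Q i a g → Q i a g')
    (H : ∀ i (g : ι → α), ∃ a, Q i a g) :
    ∃ g : ι → α, ∀ i, Q i (g i) g := by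
  classical
  let F : ∀ i : ι, (∀ j, j < i → α) → α := fun i prev =>
    Classical.choose (H i (fun j => if h : j < i then prev j h else Classical.arbitrary α))
  let g : ι → α := fun i =>
    (IsWellFounded.wf (r := ((· < ·) : ι → ι → Prop))).fix F i
  have hfix : ∀ i, g i = F i (fun j _ => g j) := fun i =>
    WellFounded.fix_eq _ F i
  refine ⟨g, fun i => ?_⟩
  have hspec : Q i (F i (fun j _ => g j))
      (fun j => if h : j < i then g j else Classical.arbitrary α) :=
    Classical.choose_spec (H i _)
  rw [hfix i]
  exact hQ i _ _ g (fun j hj => dif_pos hj) hspec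

/-- Core combinatorial lemma: given fewer than `l⁺` continuous functions and bounds,
there is an index `t` beyond all bounds and a point of the closure of the earlier part
of the sequence that none of the functions separates from `x t`. -/
theorem core_lemma {K : Type u} [TopologicalSpace K] [CompactSpace K] [T2Space K]
    {ι : Type u} [LinearOrder ι] {J : Type u}
    (l : Cardinal.{u}) (hl : ℵ₀ ≤ l)
    (x : ι → K) (f : J → C(K, ℝ)) (b : J → ι)
    (hB : l < #{t : ι | ∀ j, b j < t}) (hJ : #J ≤ l) :
    ∃ t : ι, (∀ j, b j < t) ∧
      ∃ a ∈ closure (x '' Iio t), ∀ j, f j a = f j (x t) := by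
  classical
  by_contra hcon
  push_neg at hcon
  set B : Set ι := {t : ι | ∀ j, b j < t} with hBdef
  set A := J × ℚ × Bool with hA
  set U : A → Set K := fun c =>
    if c.2.2 then {z | f c.1 z < (c.2.1 : ℝ)} else {z | (c.2.1 : ℝ) < f c.1 z} with hU
  set I : ι → Set A := fun t =>
    {c | if c.2.2 then ((c.2.1 : ℝ) < f c.1 (x t)) else (f c.1 (x t) < (c.2.1 : ℝ))} with hI
  have hUopen : ∀ c : A, IsOpen (U c) := by
    intro c
    by_cases hc : c.2.2 <;> simp only [hU, hc, if_true, if_false]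
    · exact isOpen_lt (f c.1).continuous continuous_const
    · exact isOpen_lt continuous_const (f c.1).continuous
  have key : ∀ t : B, ∃ u : Finset A,
      (∀ c ∈ u, c ∈ I t.1) ∧ ∀ z ∈ closure (x '' Iio t.1), ∃ c ∈ u, z ∈ U c := by
    rintro ⟨t, ht⟩
    have hcov : closure (x '' Iio t) ⊆ ⋃ c : A, (if c ∈ I t then U c else ∅) := by
      intro a ha
      obtain ⟨j, hj⟩ := hcon t ht a ha
      rcases lt_or_gt_of_ne hj with h1 | h1
      · obtain ⟨q, hq1, hq2⟩ := exists_rat_btwn h1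
        have hcI : ((j, q, true) : A) ∈ I t := by exact hq2
        refine mem_iUnion.mpr ⟨(j, q, true), ?_⟩
        rw [if_pos hcI]
        simpa [hU] using hq1
      · obtain ⟨q, hq1, hq2⟩ := exists_rat_btwn h1
        have hcI : ((j, q, false) : A) ∈ I t := by exact hq1
        refine mem_iUnion.mpr ⟨(j, q, false), ?_⟩
        rw [if_pos hcI]
        simpa [hU] using hq2
    have hcpt : IsCompact (closure (x '' Iio t)) := isClosed_closure.isCompact
    obtain ⟨u, hu⟩ := hcpt.elim_finite_subcover (fun c : A => if c ∈ I t then U c else ∅)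
      (fun c => by
        show IsOpen (if c ∈ I t then U c else ∅)
        split_ifs with h
        exacts [hUopen c, isOpen_empty]) hcov
    refine ⟨u.filter (· ∈ I t), fun c hc => (Finset.mem_filter.mp hc).2, ?_⟩
    intro z hz
    obtain ⟨c, hcu, hc⟩ := mem_iUnion₂.mp (hu hz)
    by_cases hcI : c ∈ I t
    · exact ⟨c, Finset.mem_filter.mpr ⟨hcu, hcI⟩, by rwa [if_pos hcI] at hc⟩
    · rw [if_neg hcI] at hc; exact absurd hc (notMem_empty z)
  choose φ hφ1 hφ2 using key
  have hmain : ∀ s t : B, φ s = φ t → (s : ι) < t → False := by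
    intro s t hst hlt
    have hx : x s.1 ∈ closure (x '' Iio t.1) :=
      subset_closure (mem_image_of_mem _ hlt)
    obtain ⟨c, hcu, hcU⟩ := hφ2 t (x s.1) hx
    have hcI_s : c ∈ I s.1 := hφ1 s c (by rwa [hst])
    obtain ⟨j, q, e⟩ := c
    cases e
    · simp only [hI, mem_setOf_eq, if_false, Bool.false_eq_true] at hcI_s
      simp only [hU, if_false, mem_setOf_eq, Bool.false_eq_true] at hcU
      linarith
    · simp only [hI, mem_setOf_eq, if_true] at hcI_s
      simp only [hU, if_true, mem_setOf_eq] at hcU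
      linarith
  have hinj : Injective φ := by
    intro s t hst
    rcases lt_trichotomy (s : ι) (t : ι) with h | h | h
    · exact absurd (hmain s t hst h) (by simp)
    · exact Subtype.ext h
    · exact absurd (hmain t s hst.symm h) (by simp)
  have h1 : #B ≤ #(Finset A) := mk_le_of_injective hinj
  have h2 : #(Finset A) ≤ #(List A) :=
    mk_le_of_injective (f := Finset.toList) (fun s t h => by
      ext a; rw [← Finset.mem_toList, h, Finset.mem_toList])
  have h3 : #(List A) ≤ max ℵ₀ #A := mk_list_le_max A
  have h4 : #A ≤ l := by
    have : #A = #J * ℵ₀ := by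
      rw [hA, mk_prod, lift_uzero, mk_eq_aleph0 (ℚ × Bool), lift_aleph0]
    rw [this]
    calc #J * ℵ₀ ≤ l * l := mul_le_mul' hJ hl
      _ = l := mul_eq_self hl
  have : #B ≤ l := h1.trans (h2.trans (h3.trans (max_le hl h4)))
  exact absurd hB (not_lt.mpr this)

/-- If `K` is a compact Hausdorff space with `hd(K) ≥ λ⁺` for some infinite cardinal `λ`,
then `K` has a bidiscrete system of cardinality `λ⁺` (where `λ⁺` denotes the cardinal
successor of `λ`). -/
theorem bidiscrete_of_hereditaryDensity_ge_succ
    {K : Type u} [TopologicalSpace K] [CompactSpace K] [T2Space K]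
    (l : Cardinal.{u}) (hl : ℵ₀ ≤ l) (h : Order.succ l ≤ hereditaryDensity K) :
    ∃ S : Set (K × K), IsBidiscrete S ∧ #S = Order.succ l := by
  classical
  set κ := Order.succ l with hκ
  set ι := κ.ord.ToType with hι
  have hmkι : #ι = κ := mk_ord_toType κ
  have hsmall : ∀ i : ι, #(Iio i) ≤ l := fun i =>
    Order.lt_succ_iff.mp (mk_Iio_ord_toType i)
  have hsmallIic : ∀ i : ι, #(Iic i) ≤ l := by
    intro i
    have : (Iic i : Set ι) = Iio i ∪ {i} := (Iio_union_right).symm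
    rw [this]
    calc #(Iio i ∪ {i} : Set ι) ≤ #(Iio i) + #({i} : Set ι) := mk_union_le _ _
      _ ≤ l + l := add_le_add (hsmall i) (by
            rw [mk_singleton]; exact one_le_aleph0.trans hl)
      _ = l := add_eq_self hl
  -- tails are big
  have htail : ∀ (J : Type u) (b : J → ι), #J ≤ l → l < #{t : ι | ∀ j, b j < t} := by
    intro J b hJ
    by_contra hle
    push_neg at hle
    have hcompl : {t : ι | ∀ j, b j < t}ᶜ ⊆ ⋃ j, Iic (b j) := by
      intro t ht
      simp only [mem_compl_iff, mem_setOf_eq, not_forall, not_lt] at ht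
      obtain ⟨j, hj⟩ := ht
      exact mem_iUnion.mpr ⟨j, hj⟩
    have h2 : #(⋃ j, Iic (b j) : Set ι) ≤ l := by
      calc #(⋃ j, Iic (b j) : Set ι) ≤ #J * ⨆ j, #(Iic (b j)) := mk_iUnion_le _
        _ ≤ l * l := mul_le_mul' hJ (ciSup_le' fun j => hsmallIic _)
        _ = l := mul_eq_self hl
    have h3 : #(({t : ι | ∀ j, b j < t}ᶜ : Set ι)) ≤ l :=
      (mk_le_mk_of_subset hcompl).trans h2
    have h4 : κ ≤ l := by
      calc κ = #ι := hmkι.symm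
        _ = #(univ : Set ι) := mk_univ.symm
        _ = #(({t : ι | ∀ j, b j < t} ∪ {t : ι | ∀ j, b j < t}ᶜ : Set ι)) := by
            rw [union_compl_self]
        _ ≤ #({t : ι | ∀ j, b j < t}) + #(({t : ι | ∀ j, b j < t}ᶜ : Set ι)) := mk_union_le _ _
        _ ≤ l + l := add_le_add hle h3
        _ = l := add_eq_self hl
    exact absurd (Order.succ_le_iff.mp h4) (lt_irrefl l)
  -- find a subspace of density > l
  have hY : ∃ Y : Set K, κ ≤ density Y := by
    by_contra hno
    push_neg at hno
    have : hereditaryDensity K ≤ l := ciSup_le' fun Y => Order.lt_succ_iff.mp (hno Y)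
    exact absurd (Order.succ_le_iff.mp (h.trans this)) (lt_irrefl l)
  obtain ⟨Y, hYd⟩ := hY
  have hdense_big : ∀ s : Set Y, Dense s → κ ≤ #s := fun s hs =>
    hYd.trans (csInf_le (OrderBot.bddBelow _) ⟨s, hs, rfl⟩)
  have hnotdense : ∀ s : Set Y, #s ≤ l → ∃ y : Y, y ∉ closure s := by
    intro s hs
    by_contra hc
    push_neg at hc
    have hd : Dense s := fun y => hc y
    have := (hdense_big s hd).trans hs
    exact absurd (Order.succ_le_iff.mp this) (lt_irrefl l)
  have hNY : Nonempty Y := by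
    rcases isEmpty_or_nonempty Y with he | hne
    · have hd : Dense (∅ : Set Y) := fun y => (he.false y).elim
      have h0 := hdense_big ∅ hd
      rw [mk_emptyCollection] at h0
      have hpos : (0 : Cardinal) < κ := lt_of_lt_of_le aleph0_pos (hl.trans (Order.le_succ l))
      exact absurd h0 (not_le.mpr hpos)
    · exact hne
  -- build a left-separated sequence in Y
  have hxY : ∃ x : ι → Y, ∀ i, (x i) ∉ closure (x '' Iio i) := by
    refine wf_rec_exists (fun i a g => a ∉ closure (g '' Iio i)) ?_ ?_
    · intro i a g g' hagree hQ
      have : g' '' Iio i = g '' Iio i := by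
        apply image_congr
        intro j hj
        exact (hagree j hj).symm
      rwa [this]
    · intro i g
      apply hnotdense
      calc #(g '' Iio i) ≤ #(Iio i) := mk_image_le
        _ ≤ l := hsmall i
  obtain ⟨x', hx'⟩ := hxY
  set x : ι → K := fun i => (x' i : K) with hx
  have hxsep : ∀ i, x i ∉ closure (x '' Iio i) := by
    intro i hmem
    apply hx' i
    rw [closure_subtype]
    have : (Subtype.val '' (x' '' Iio i)) = x '' Iio i := by
      rw [← image_comp]; rfl
    rwa [this]
  -- the main recursion
  have hNtrip : Nonempty (ι × K × C(K, ℝ)) := by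
    have : Nonempty ι := mk_ne_zero_iff.mp (by
      rw [hmkι]
      exact ne_of_gt (lt_of_lt_of_le aleph0_pos (hl.trans (Order.le_succ l))))
    have : Nonempty K := ⟨(Classical.choice hNY : Y).1⟩
    exact ⟨⟨Classical.arbitrary ι, Classical.arbitrary K, 0⟩⟩
  obtain ⟨g, hg⟩ := wf_rec_exists
    (fun γ (w : ι × K × C(K, ℝ)) (g : ι → ι × K × C(K, ℝ)) =>
      (∀ β, β < γ → (g β).1 < w.1) ∧
      w.2.1 ∈ closure (x '' Iio w.1) ∧
      (∀ β, β < γ → (g β).2.2 w.2.1 = (g β).2.2 (x w.1)) ∧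
      (∀ z ∈ closure (x '' Iio w.1), w.2.2 z = 0) ∧
      w.2.2 (x w.1) = 1)
    (by
      rintro γ w g g' hagree ⟨h1, h2, h3, h4, h5⟩
      exact ⟨fun β hβ => hagree β hβ ▸ h1 β hβ, h2,
        fun β hβ => hagree β hβ ▸ h3 β hβ, h4, h5⟩)
    (by
      intro γ g
      have hJcard : #(Iio γ : Set ι) ≤ l := hsmall γ
      obtain ⟨t, hbt, a, haD, haeq⟩ := core_lemma (ι := ι) (J := ↥(Iio γ)) l hl x
        (fun β => (g β.1).2.2) (fun β => (g β.1).1)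
        (htail _ _ hJcard) hJcard
      obtain ⟨f, hf0, hf1, -⟩ := exists_continuous_zero_one_of_isClosed
        (isClosed_closure (s := x '' Iio t)) (isClosed_singleton (x := x t))
        (disjoint_singleton_right.mpr (hxsep t))
      refine ⟨(t, a, f), fun β hβ => hbt ⟨β, hβ⟩, haD, fun β hβ => haeq ⟨β, hβ⟩,
        fun z hz => hf0 hz, hf1 rfl⟩)
  set t : ι → ι := fun γ => (g γ).1 with ht
  set a : ι → K := fun γ => (g γ).2.1 with ha
  set F : ι → C(K, ℝ) := fun γ => (g γ).2.2 with hF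
  have htmono : ∀ {β γ : ι}, β < γ → t β < t γ := fun {β γ} hβγ => (hg γ).1 β hβγ
  have hxinj : ∀ {i j : ι}, i < j → x i ≠ x j := by
    intro i j hij heq
    exact hxsep j (heq ▸ subset_closure (mem_image_of_mem _ hij))
  set p : ι → K × K := fun γ => (a γ, x (t γ)) with hp
  have hpinj : Injective p := by
    intro γ δ hγδ
    have h2 : x (t γ) = x (t δ) := congrArg Prod.snd hγδ
    rcases lt_trichotomy γ δ with hc | hc | hc
    · exact absurd h2 (hxinj (htmono hc))
    · exact hc
    · exact absurd h2.symm (hxinj (htmono hc))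
  refine ⟨range p, ?_, by rw [mk_range_eq p hpinj, hmkι]⟩
  refine ⟨fun s => F (Classical.choose s.2), ?_⟩
  rintro s
  obtain ⟨q0, hq0⟩ : ∃ γ, p γ = (s : K × K) := s.2
  set γ := Classical.choose s.2 with hγdef
  have hγ : p γ = (s : K × K) := Classical.choose_spec s.2
  have hD : a γ ∈ closure (x '' Iio (t γ)) := (hg γ).2.1
  refine ⟨?_, ?_, ?_⟩
  · rw [← hγ]
    exact (hg γ).2.2.2.1 _ hD
  · rw [← hγ]
    exact (hg γ).2.2.2.2
  · intro q hqs
    set δ := Classical.choose q.2 with hδdef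
    have hδ : p δ = (q : K × K) := Classical.choose_spec q.2
    have hδγ : δ ≠ γ := by
      intro hcontra
      apply hqs
      apply Subtype.ext
      rw [← hδ, ← hγ, hcontra]
    show F γ (q : K × K).1 = F γ (q : K × K).2
    rw [← hδ]
    rcases hδγ.lt_or_gt with hc | hc
    · -- δ < γ : both values are 0
      have h1 : a δ ∈ closure (x '' Iio (t γ)) := by
        refine closure_mono (image_mono fun z hz => ?_) ((hg δ).2.1)
        exact lt_trans hz (htmono hc)
      have h2 : x (t δ) ∈ closure (x '' Iio (t γ)) :=
        subset_closure (mem_image_of_mem _ (htmono hc))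
      rw [(hg γ).2.2.2.1 _ h1, (hg γ).2.2.2.1 _ h2]
    · -- γ < δ
      exact (hg δ).2.2.1 γ hc
end

section
/- Let K be the split interval, i.e., the set [0,1] × {0,1} equipped with the order topology of the lexicographic order. Then the family {((x,0), (x,1)) : x ∈ [0,1]} is a very nice bidiscrete system in K; this is exemplified by the clopen sets H_x = {r ∈ K : r > (x,0)} for x ∈ [0,1]. -/
/-- The split interval (double arrow space): the set `[0,1] × {0,1}` with the
lexicographic order. It carries the order topology (declared below). -/
def SplitInterval : Type := Lex (↥(Set.Icc (0 : ℝ) 1) × Bool)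

noncomputable instance : LinearOrder SplitInterval :=
  inferInstanceAs (LinearOrder (Lex (↥(Set.Icc (0 : ℝ) 1) × Bool)))

noncomputable instance : TopologicalSpace SplitInterval := Preorder.topology SplitInterval

instance : OrderTopology SplitInterval := ⟨rfl⟩

/-- The point `(x, l)` of the split interval, for `x ∈ [0,1]` and `l ∈ {0,1}`. -/
def SplitInterval.mk (x : ↥(Set.Icc (0 : ℝ) 1)) (l : Bool) : SplitInterval :=
  toLex (x, l)

lemma SplitInterval.lt_iff {x y : ↥(Set.Icc (0 : ℝ) 1)} {a b : Bool} :
    SplitInterval.mk x a < SplitInterval.mk y b ↔ x < y ∨ x = y ∧ a < b :=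
  Prod.Lex.lt_iff

lemma SplitInterval.eq_mk (r : SplitInterval) :
    r = SplitInterval.mk (ofLex r).1 (ofLex r).2 := rfl

/-- In the split interval `K`, the family `{((x,0), (x,1)) : x ∈ [0,1]}` is a very nice
bidiscrete system, as exemplified by the clopen sets `H_x = {r ∈ K : r > (x,0)}`:
each `H_x` is clopen, contains `(x,1)` but not `(x,0)`, and for `y ≠ x` it contains
`(y,0)` if and only if it contains `(y,1)`. -/
theorem splitInterval_very_nice_bidiscrete :
    ∀ x : ↥(Set.Icc (0 : ℝ) 1),
      IsClopen {r : SplitInterval | SplitInterval.mk x false < r} ∧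
      SplitInterval.mk x true ∈ {r : SplitInterval | SplitInterval.mk x false < r} ∧
      SplitInterval.mk x false ∉ {r : SplitInterval | SplitInterval.mk x false < r} ∧
      ∀ y : ↥(Set.Icc (0 : ℝ) 1), y ≠ x →
        (SplitInterval.mk y false ∈ {r : SplitInterval | SplitInterval.mk x false < r} ↔
          SplitInterval.mk y true ∈ {r : SplitInterval | SplitInterval.mk x false < r}) := by
  intro x
  have hset : {r : SplitInterval | SplitInterval.mk x false < r}
      = Set.Ioi (SplitInterval.mk x false) := rfl
  refine ⟨⟨?_, ?_⟩, ?_, ?_, ?_⟩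
  · -- closed: complement is Iio (x, true)
    rw [hset, ← isOpen_compl_iff]
    have hc : (Set.Ioi (SplitInterval.mk x false))ᶜ = Set.Iio (SplitInterval.mk x true) := by
      ext r
      set y := (ofLex r).1 with hy
      set b := (ofLex r).2 with hb
      rw [Set.mem_compl_iff, Set.mem_Ioi, Set.mem_Iio, not_lt,
        SplitInterval.eq_mk r, ← hy, ← hb, SplitInterval.lt_iff]
      constructor
      · intro h
        have hyx : y ≤ x := by
          by_contra hyx
          exact absurd (SplitInterval.lt_iff.mpr (Or.inl (lt_of_not_ge hyx))) (not_lt.mpr h)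
        rcases lt_or_eq_of_le hyx with h1 | h1
        · exact Or.inl h1
        · refine Or.inr ⟨h1, ?_⟩
          cases hbb : b with
          | false => exact Bool.false_lt_true
          | true =>
            exfalso
            refine absurd (SplitInterval.lt_iff.mpr (Or.inr ⟨h1.symm, ?_⟩)) (not_lt.mpr h)
            rw [hbb]; exact Bool.false_lt_true
      · rintro (h | ⟨h1, h2⟩)
        · refine not_lt.mp fun hlt => ?_
          rcases SplitInterval.lt_iff.mp hlt with hc | ⟨hc, _⟩
          · exact absurd h (not_lt.mpr hc.le)
          · exact absurd h (not_lt.mpr hc.le)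
        · refine not_lt.mp fun hlt => ?_
          rcases SplitInterval.lt_iff.mp hlt with hc | ⟨_, hc⟩
          · exact absurd h1 hc.ne'
          · have hbf : b = false := by
              cases hbb : b with
              | false => rfl
              | true => rw [hbb] at h2; exact absurd h2 (by simp)
            rw [hbf] at hc
            exact absurd hc (by simp)
    rw [hc]
    exact isOpen_Iio
  · rw [hset]; exact isOpen_Ioi
  · show SplitInterval.mk x false < SplitInterval.mk x true
    exact SplitInterval.lt_iff.mpr (Or.inr ⟨rfl, Bool.false_lt_true⟩)
  · show ¬ SplitInterval.mk x false < SplitInterval.mk x false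
    exact lt_irrefl _
  · intro y hyx
    show SplitInterval.mk x false < SplitInterval.mk y false ↔
      SplitInterval.mk x false < SplitInterval.mk y true
    rw [SplitInterval.lt_iff, SplitInterval.lt_iff]
    constructor
    · rintro (h | ⟨h, hb⟩)
      · exact Or.inl h
      · exact absurd hb (by simp)
    · rintro (h | ⟨h, _⟩)
      · exact Or.inl h
      · exact absurd h hyx.symm
end

section
/- Let K be a non-empty closed subset of 2^{ω₁} satisfying conditions (R4) and (R8) with split points s_α (ω ≤ α < ω₁). Then for any two distinct ordinals α, β with ω ≤ α, β < ω₁, we have s_α↾ω ≠ s_β↾ω. -/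
noncomputable section

open Cardinal Set

/-- The first uncountable ordinal `ω₁`. -/
def ω1 : Ordinal.{0} := (Cardinal.aleph 1).ord

/-- We represent an element of the Cantor cube `2^α` (for an ordinal `α`) as a function
`Ordinal → Bool` vanishing on coordinates `≥ α`. `truncate α x` is the restriction
`x↾α` of `x` to `α` in this representation. -/
def truncate (α : Ordinal.{0}) (x : Ordinal.{0} → Bool) : Ordinal.{0} → Bool :=
  fun β => if β < α then x β else false

/-- Condition (R4) for `K ⊆ 2^{ω₁}` with split points `s_α ∈ 2^α` (for `ω ≤ α < ω₁`):
(i) both extensions of `s_α` by `0` and by `1` at coordinate `α` belong to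
`K_{α+1} = {x↾(α+1) : x ∈ K}`, and (ii) whenever `u, v ∈ K_{α+1}` satisfy `u↾α = v↾α`
and `u(α) ≠ v(α)`, then `u↾α = s_α`. -/
def CondR4 (K : Set (Ordinal.{0} → Bool)) (s : Ordinal.{0} → Ordinal.{0} → Bool) : Prop :=
  ∀ α : Ordinal.{0}, Ordinal.omega0 ≤ α → α < ω1 →
    truncate α (s α) = s α ∧
    (∀ b : Bool, Function.update (s α) α b ∈ truncate (α + 1) '' K) ∧
    (∀ u ∈ truncate (α + 1) '' K, ∀ v ∈ truncate (α + 1) '' K,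
      truncate α u = truncate α v → u α ≠ v α → truncate α u = s α)

/-- Condition (R8): whenever `ω ≤ α < β < ω₁`, `s_β↾α ≠ s_α`. -/
def CondR8 (s : Ordinal.{0} → Ordinal.{0} → Bool) : Prop :=
  ∀ α β : Ordinal.{0}, Ordinal.omega0 ≤ α → α < β → β < ω1 →
    truncate α (s β) ≠ s α

lemma truncate_truncate {γ δ : Ordinal.{0}} (h : γ ≤ δ) (x : Ordinal.{0} → Bool) :
    truncate γ (truncate δ x) = truncate γ x := by
  funext ε
  by_cases hε : ε < γ
  · simp [truncate, hε, hε.trans_le h]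
  · simp [truncate, hε]

lemma truncate_update {γ α : Ordinal.{0}} (h : γ ≤ α) (f : Ordinal.{0} → Bool) (b : Bool) :
    truncate γ (Function.update f α b) = truncate γ f := by
  funext δ
  by_cases hδ : δ < γ
  · have hne : δ ≠ α := (hδ.trans_le h).ne
    simp [truncate, hδ, Function.update_of_ne hne]
  · simp [truncate, hδ]

/-- Key lemma: the asymmetric case `α < β`. -/
lemma split_key (K : Set (Ordinal.{0} → Bool))
    (s : Ordinal.{0} → Ordinal.{0} → Bool) (hR4 : CondR4 K s) (hR8 : CondR8 s)
    {α β : Ordinal.{0}} (hωα : Ordinal.omega0 ≤ α) (hαβ : α < β) (hβ : β < ω1) :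
    truncate Ordinal.omega0 (s α) ≠ truncate Ordinal.omega0 (s β) := by
  intro heq
  have hα : α < ω1 := hαβ.trans hβ
  obtain ⟨hsα, hextα, _⟩ := hR4 α hωα hα
  obtain ⟨_, hextβ, _⟩ := hR4 β (hωα.trans hαβ.le) hβ
  -- there is a point of disagreement below α
  have hne' : truncate α (s β) ≠ s α := hR8 α β hωα hαβ hβ
  have hS : ∃ δ, δ < α ∧ s α δ ≠ s β δ := by
    by_contra hc
    push_neg at hc
    apply hne'
    funext δ
    by_cases hδ : δ < α
    · simp [truncate, hδ, (hc δ hδ).symm]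
    · have := congrFun hsα δ
      simp [truncate, hδ] at this ⊢
      exact this
  classical
  set S : Set Ordinal.{0} := {δ | s α δ ≠ s β δ} with hSdef
  have hSne : S.Nonempty := ⟨hS.choose, hS.choose_spec.2⟩
  set γ : Ordinal.{0} := sInf S with hγdef
  have hγS : γ ∈ S := csInf_mem hSne
  have hγmin : ∀ δ < γ, s α δ = s β δ := by
    intro δ hδ
    by_contra hd
    exact absurd (csInf_le' (show δ ∈ S from hd)) (not_le.2 hδ)
  have hγα : γ < α := lt_of_le_of_lt (csInf_le' hS.choose_spec.2) hS.choose_spec.1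
  have hγω : Ordinal.omega0 ≤ γ := by
    by_contra h
    push_neg at h
    have := congrFun heq γ
    simp [truncate, h] at this
    exact hγS this
  have hγ1 : γ < ω1 := hγα.trans hα
  have hγ1α : γ + 1 ≤ α := Order.add_one_le_iff.mpr hγα
  have hγ1β : γ + 1 ≤ β := Order.add_one_le_iff.mpr (hγα.trans hαβ)
  -- the truncations of s_α and s_β to γ+1 belong to K_{γ+1}
  obtain ⟨x, hxK, hx⟩ := hextα true
  obtain ⟨y, hyK, hy⟩ := hextβ true
  have hu : truncate (γ + 1) (s α) ∈ truncate (γ + 1) '' K := by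
    refine ⟨x, hxK, ?_⟩
    rw [← truncate_truncate (show γ + 1 ≤ α + 1 from hγ1α.trans (le_of_lt (lt_add_one α))) x,
      hx, truncate_update hγ1α]
  have hv : truncate (γ + 1) (s β) ∈ truncate (γ + 1) '' K := by
    refine ⟨y, hyK, ?_⟩
    rw [← truncate_truncate (show γ + 1 ≤ β + 1 from hγ1β.trans (le_of_lt (lt_add_one β))) y,
      hy, truncate_update hγ1β]
  obtain ⟨_, _, huniq⟩ := hR4 γ hγω hγ1
  have hγsucc : γ < γ + 1 := lt_add_one γ
  have hagree : truncate γ (truncate (γ + 1) (s α)) = truncate γ (truncate (γ + 1) (s β)) := by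
    rw [truncate_truncate hγsucc.le, truncate_truncate hγsucc.le]
    funext δ
    by_cases hδ : δ < γ
    · simp [truncate, hδ, hγmin δ hδ]
    · simp [truncate, hδ]
  have hdiff : truncate (γ + 1) (s α) γ ≠ truncate (γ + 1) (s β) γ := by
    simpa [truncate, hγsucc] using (show s α γ ≠ s β γ from hγS)
  have hkey := huniq _ hu _ hv hagree hdiff
  rw [truncate_truncate hγsucc.le] at hkey
  exact hR8 γ α hγω hγα hα hkey

/-- Let `K` be a non-empty closed subset of `2^{ω₁}` satisfying conditions (R4) and (R8)
with split points `s_α` (`ω ≤ α < ω₁`). Then for any two distinct ordinals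
`α, β ∈ [ω, ω₁)` we have `s_α↾ω ≠ s_β↾ω`. -/
theorem split_points_distinct_on_omega
    (K : Set (Ordinal.{0} → Bool)) (hKne : K.Nonempty) (hKcl : IsClosed K)
    (hKsub : ∀ x ∈ K, truncate ω1 x = x)
    (s : Ordinal.{0} → Ordinal.{0} → Bool) (hR4 : CondR4 K s) (hR8 : CondR8 s)
    (α β : Ordinal.{0}) (hωα : Ordinal.omega0 ≤ α) (hωβ : Ordinal.omega0 ≤ β)
    (hα : α < ω1) (hβ : β < ω1) (hne : α ≠ β) :
    truncate Ordinal.omega0 (s α) ≠ truncate Ordinal.omega0 (s β) := by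
  rcases hne.lt_or_gt with h | h
  · exact split_key K s hR4 hR8 hωα h hβ
  · exact (split_key K s hR4 hR8 hωβ h hα).symm

end
end

section
/- Let K be a closed subspace of 2^{ω₁} and for α ≤ ω₁ let π_α : K → 2^α denote the restriction map x ↦ x↾α. Then K is hereditarily separable and hereditarily Lindelöf if and only if for every closed H ⊆ K there is an α < ω₁ such that π_α is irreducible on π_α^{-1}(π_α(H)). -/
noncomputable section

open Cardinal Set

/-- A map `f : X → Y` is *irreducible on* `A ⊆ X` if for every proper closed subset `F`
of `A` (closed in the subspace `A`), the image `f '' F` is a proper subset of `f '' A`. -/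
def IrreducibleOn {X Y : Type*} [TopologicalSpace X] (f : X → Y) (A : Set X) : Prop :=
  ∀ F : Set X, F ⊆ A → IsClosed ((fun a : ↥A => (a : X)) ⁻¹' F) → F ≠ A →
    f '' F ⊂ f '' A

lemma truncate_eq_iff {α : Ordinal.{0}} {x y : Ordinal.{0} → Bool} :
    truncate α x = truncate α y ↔ ∀ β, β < α → x β = y β := by
  constructor
  · intro h β hβ
    have := congrFun h β
    simpa [truncate, if_pos hβ] using this
  · intro h
    funext β
    by_cases hβ : β < α
    · simp [truncate, if_pos hβ, h β hβ]
    · simp [truncate, if_neg hβ]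

lemma truncate_mono {γ α : Ordinal.{0}} (hγ : γ ≤ α) {x y : Ordinal.{0} → Bool}
    (h : truncate α x = truncate α y) : truncate γ x = truncate γ y := by
  rw [truncate_eq_iff] at h ⊢
  exact fun β hβ => h β (lt_of_lt_of_le hβ hγ)

lemma zero_lt_ω1 : (0 : Ordinal.{0}) < ω1 :=
  Cardinal.lt_ord.mpr (by simpa using (Cardinal.aleph0_pos.trans Cardinal.aleph0_lt_aleph_one))

lemma countable_Iio_of_lt_ω1 {α : Ordinal.{0}} (hα : α < ω1) : Countable ↥(Set.Iio α) := by
  rw [Set.countable_coe_iff]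
  rw [Cardinal.countable_iff_lt_aleph_one]
  rw [Ordinal.mk_Iio_ordinal]
  rw [Cardinal.lift_lt_aleph_one]
  exact Cardinal.lt_ord.mp hα

lemma csup (S : Set Ordinal.{0}) (hc : S.Countable) (hb : ∀ β ∈ S, β < ω1) :
    ∃ α : Ordinal.{0}, α < ω1 ∧ ∀ β ∈ S, β < α := by
  rcases S.eq_empty_or_nonempty with rfl | hne
  · exact ⟨0, zero_lt_ω1, by simp⟩
  obtain ⟨f, rfl⟩ := hc.exists_eq_range hne
  have hlim : Order.IsSuccLimit (ω1 : Ordinal.{0}) := Cardinal.isSuccLimit_ord Cardinal.aleph0_lt_aleph_one.le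
  refine ⟨iSup (fun n => Order.succ (f n)), ?_, ?_⟩
  · exact (by have := Ordinal.iSup_lt_omega_one (f := fun n => Order.succ (f n)) (by rw [← Cardinal.ord_aleph]; exact fun n => hlim.succ_lt (hb _ (mem_range_self n))); rwa [← Cardinal.ord_aleph] at this)
  · rintro β ⟨n, rfl⟩
    exact lt_of_lt_of_le (Order.lt_succ _) (le_ciSup (Ordinal.bddAbove_range _) n)

section
variable {K : Set (Ordinal.{0} → Bool)}

def sbox (K : Set (Ordinal.{0} → Bool)) {α : Ordinal.{0}} (s : Finset ↥(Set.Iio α))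
    (x : Ordinal.{0} → Bool) : Set ↥K :=
  {y : ↥K | ∀ β ∈ s, (y : Ordinal.{0} → Bool) ↑β = x ↑β}

lemma continuous_eval (β : Ordinal.{0}) :
    Continuous fun y : ↥K => (y : Ordinal.{0} → Bool) β :=
  (continuous_apply β).comp continuous_subtype_val

lemma isOpen_sbox {α : Ordinal.{0}} (s : Finset ↥(Set.Iio α)) (x : Ordinal.{0} → Bool) :
    IsOpen (sbox K s x) := by
  have : sbox K s x = ⋂ β ∈ s, {y : ↥K | (y : Ordinal.{0} → Bool) ↑β = x ↑β} := by
    ext y; simp [sbox]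
  rw [this]
  exact (s.finite_toSet).isOpen_biInter fun β _ =>
    (isOpen_discrete {x ↑β}).preimage (continuous_eval _)

lemma isClosed_sbox {α : Ordinal.{0}} (s : Finset ↥(Set.Iio α)) (x : Ordinal.{0} → Bool) :
    IsClosed (sbox K s x) := by
  have : sbox K s x = ⋂ β ∈ s, {y : ↥K | (y : Ordinal.{0} → Bool) ↑β = x ↑β} := by
    ext y; simp [sbox]
  rw [this]
  exact isClosed_biInter fun β _ =>
    (isClosed_discrete {x ↑β}).preimage (continuous_eval _)

lemma compactSpaceK (hKcl : IsClosed K) : CompactSpace ↥K :=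
  isCompact_iff_compactSpace.mp hKcl.isCompact

lemma sep_finset (hKcl : IsClosed K) {F : Set ↥K} (hF : IsClosed F) (α : Ordinal.{0})
    (x : Ordinal.{0} → Bool)
    (h : ∀ y ∈ F, ∃ β, β < α ∧ (y : Ordinal.{0} → Bool) β ≠ x β) :
    ∃ s : Finset ↥(Set.Iio α), ∀ y ∈ F, ∃ β ∈ s, (y : Ordinal.{0} → Bool) ↑β ≠ x ↑β := by
  haveI := compactSpaceK hKcl
  have hFc : IsCompact F := hF.isCompact
  obtain ⟨s, hs⟩ := hFc.elim_finite_subcover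
    (fun β : ↥(Set.Iio α) => {y : ↥K | (y : Ordinal.{0} → Bool) ↑β ≠ x ↑β})
    (fun β => (isOpen_discrete {x ↑β}ᶜ).preimage (continuous_eval _))
    (fun y hy => by
      obtain ⟨β, hβ, hne⟩ := h y hy
      exact mem_iUnion.mpr ⟨⟨β, hβ⟩, hne⟩)
  exact ⟨s, fun y hy => by simpa using hs hy⟩

lemma eq_of_agree_below (hKsub : ∀ x ∈ K, truncate ω1 x = x) {x y : ↥K}
    (h : ∀ β, β < ω1 → (x : Ordinal.{0} → Bool) β = (y : Ordinal.{0} → Bool) β) : x = y := by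
  have hx := hKsub _ x.2
  have hy := hKsub _ y.2
  apply Subtype.ext
  funext β
  by_cases hβ : β < ω1
  · exact h β hβ
  · have h1 := congrFun hx β
    have h2 := congrFun hy β
    simp only [truncate, if_neg hβ] at h1 h2
    rw [← h1, ← h2]

/-- Key "capture" lemma: hereditary Lindelöfness yields a countable level at which
a closed set becomes saturated for the projection. -/
lemma capture (hKcl : IsClosed K) (hKsub : ∀ x ∈ K, truncate ω1 x = x)
    (hLin : ∀ Y : Set ↥K, IsLindelof Y) (H : Set ↥K) (hH : IsClosed H) :
    ∃ α : Ordinal.{0}, α < ω1 ∧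
      ∀ x h : ↥K, h ∈ H → truncate α ↑x = truncate α ↑h → x ∈ H := by
  classical
  have hsel : ∀ x : ↥K, ∃ s : Finset ↥(Set.Iio ω1),
      x ∉ H → ∀ y ∈ H, ∃ β ∈ s, (y : Ordinal.{0} → Bool) ↑β ≠ (x : Ordinal.{0} → Bool) ↑β := by
    intro x
    by_cases hx : x ∈ H
    · exact ⟨∅, fun h => absurd hx h⟩
    · obtain ⟨s, hs⟩ := sep_finset hKcl hH ω1 ↑x (fun y hy => by
        by_contra hc
        push_neg at hc
        have : y = x := eq_of_agree_below hKsub (fun β hβ => hc β hβ)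
        exact hx (this ▸ hy))
      exact ⟨s, fun _ => hs⟩
  choose s hs using hsel
  set U : ↥K → Set ↥K := fun x => if x ∈ H then ∅ else sbox K (s x) ↑x with hU
  have hUopen : ∀ x, IsOpen (U x) := by
    intro x
    by_cases hx : x ∈ H <;> simp [hU, hx, isOpen_sbox]
  have hcov : Hᶜ ⊆ ⋃ x, U x := by
    intro x hx
    refine mem_iUnion.mpr ⟨x, ?_⟩
    simp only [hU, if_neg hx]
    exact fun β _ => rfl
  obtain ⟨t, htc, htcov⟩ := (hLin Hᶜ).elim_countable_subcover U hUopen hcov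
  -- collect all coordinates used
  set S : Set Ordinal.{0} := ⋃ x ∈ t, (fun β : ↥(Set.Iio ω1) => (β : Ordinal.{0})) '' ↑(s x)
    with hS
  have hSc : S.Countable :=
    htc.biUnion fun x _ => ((s x).finite_toSet.image _).countable
  have hSb : ∀ β ∈ S, β < ω1 := by
    rintro β hβ
    simp only [hS, mem_iUnion] at hβ
    obtain ⟨x, -, ⟨γ, -, rfl⟩⟩ := hβ
    exact γ.2
  obtain ⟨α, hα, hαS⟩ := csup S hSc hSb
  refine ⟨α, hα, fun x h hh hagree => ?_⟩
  by_contra hx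
  obtain ⟨x₀, hx₀t, hx₀mem⟩ := by
    have := htcov hx
    simpa only [mem_iUnion] using this
  have hx₀H : x₀ ∉ H := by
    intro hc
    simp only [hU, if_pos hc] at hx₀mem
    exact hx₀mem
  simp only [hU, if_neg hx₀H] at hx₀mem
  -- h agrees with x₀ on s x₀, hence contradiction with hs
  obtain ⟨β, hβs, hβne⟩ := hs x₀ hx₀H h hh
  apply hβne
  have hβS : (β : Ordinal.{0}) ∈ S := by
    simp only [hS, mem_iUnion]
    exact ⟨x₀, hx₀t, β, hβs, rfl⟩
  have hβα : (β : Ordinal.{0}) < α := hαS _ hβS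
  have h1 : (h : Ordinal.{0} → Bool) ↑β = (x : Ordinal.{0} → Bool) ↑β :=
    ((truncate_eq_iff).mp hagree _ hβα).symm
  have h2 : (x : Ordinal.{0} → Bool) ↑β = (x₀ : Ordinal.{0} → Bool) ↑β := hx₀mem β hβs
  rw [h1, h2]


def cbox (K : Set (Ordinal.{0} → Bool)) {α : Ordinal.{0}} (e : Finset (↥(Set.Iio α) × Bool)) :
    Set ↥K :=
  {y : ↥K | ∀ p ∈ e, (y : Ordinal.{0} → Bool) ↑p.1 = p.2}

lemma isOpen_cbox {α : Ordinal.{0}} (e : Finset (↥(Set.Iio α) × Bool)) :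
    IsOpen (cbox K e) := by
  have : cbox K e = ⋂ p ∈ e, {y : ↥K | (y : Ordinal.{0} → Bool) ↑p.1 = p.2} := by
    ext y; simp [cbox]
  rw [this]
  exact (e.finite_toSet).isOpen_biInter fun p _ =>
    (isOpen_discrete {p.2}).preimage (continuous_eval _)

lemma isClosed_cbox {α : Ordinal.{0}} (e : Finset (↥(Set.Iio α) × Bool)) :
    IsClosed (cbox K e) := by
  have : cbox K e = ⋂ p ∈ e, {y : ↥K | (y : Ordinal.{0} → Bool) ↑p.1 = p.2} := by
    ext y; simp [cbox]
  rw [this]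
  exact isClosed_biInter fun p _ =>
    (isClosed_discrete {p.2}).preimage (continuous_eval _)

lemma forward (hKcl : IsClosed K) (hKsub : ∀ x ∈ K, truncate ω1 x = x)
    (hSep : ∀ Y : Set ↥K, TopologicalSpace.SeparableSpace Y)
    (hLin : ∀ Y : Set ↥K, IsLindelof Y) (H : Set ↥K) (hH : IsClosed H) :
    ∃ α : Ordinal.{0}, α < ω1 ∧
      IrreducibleOn (fun x : ↥K => truncate α ↑x)
        ((fun x : ↥K => truncate α ↑x) ⁻¹' ((fun x : ↥K => truncate α ↑x) '' H)) := by
  classical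
  obtain ⟨α₀, hα₀, hcap⟩ := capture hKcl hKsub hLin H hH
  -- countable dense subset of H
  obtain ⟨S', hS'c, hS'd⟩ := (hSep H).exists_countable_dense
  set D : Set ↥K := Subtype.val '' S' with hD
  have hDc : D.Countable := hS'c.image _
  have hDH : D ⊆ H := by rintro _ ⟨d, -, rfl⟩; exact d.2
  have hHD : ∀ h ∈ H, (h : ↥K) ∈ closure D := by
    intro h hh
    exact closure_subtype.mp (hS'd ⟨h, hh⟩)
  -- per-point capture
  have hchoice : ∀ d : ↥K, ∃ γ : Ordinal.{0}, γ < ω1 ∧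
      ∀ x : ↥K, truncate γ ↑x = truncate γ ↑d → x = d := by
    intro d
    obtain ⟨γ, hγ, hcapd⟩ := capture hKcl hKsub hLin {d} isClosed_singleton
    exact ⟨γ, hγ, fun x hx => hcapd x d rfl hx⟩
  choose g hg1 hg2 using hchoice
  obtain ⟨α, hαω, hbd⟩ := csup (insert α₀ (g '' D)) ((hDc.image g).insert α₀)
    (by rintro β (rfl | ⟨d, -, rfl⟩); exacts [hα₀, hg1 d])
  have hα₀α : α₀ ≤ α := le_of_lt (hbd _ (mem_insert _ _))
  refine ⟨α, hαω, ?_⟩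
  have hA : (fun x : ↥K => truncate α ↑x) ⁻¹' ((fun x : ↥K => truncate α ↑x) '' H) = H := by
    apply Subset.antisymm
    · intro x hx
      obtain ⟨h, hh, heq⟩ := hx
      exact hcap x h hh (truncate_mono hα₀α heq.symm)
    · intro h hh
      exact ⟨h, hh, rfl⟩
  intro F hFA hFcl hFne
  rw [hA] at hFA hFne
  rw [hA]
  -- F is closed in ↥K
  have hAcl : IsClosed ((fun x : ↥K => truncate α ↑x) ⁻¹'
      ((fun x : ↥K => truncate α ↑x) '' H)) := by rw [hA]; exact hH
  have hFclosed : IsClosed F := by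
    obtain ⟨C, hCcl, hCpre⟩ := isClosed_induced_iff.mp hFcl
    have hFeq : F = H ∩ C := by
      ext x
      constructor
      · intro hxF
        have hxA : x ∈ (fun x : ↥K => truncate α ↑x) ⁻¹'
            ((fun x : ↥K => truncate α ↑x) '' H) := by rw [hA]; exact hFA hxF
        refine ⟨hFA hxF, ?_⟩
        have := (Set.ext_iff.mp hCpre ⟨x, hxA⟩).mpr
        exact this hxF
      · rintro ⟨hxH, hxC⟩
        have hxA : x ∈ (fun x : ↥K => truncate α ↑x) ⁻¹'
            ((fun x : ↥K => truncate α ↑x) '' H) := by rw [hA]; exact hxH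
        exact (Set.ext_iff.mp hCpre ⟨x, hxA⟩).mp hxC
    rw [hFeq]
    exact hH.inter hCcl
  have hFH : F ⊂ H := (Set.ssubset_iff_subset_ne).mpr ⟨hFA, hFne⟩
  obtain ⟨z, hzH, hzF⟩ := exists_of_ssubset hFH
  obtain ⟨s, hs⟩ := sep_finset hKcl hFclosed ω1 (↑z) (by
    intro y hy
    by_contra hc
    push_neg at hc
    exact hzF ((eq_of_agree_below hKsub hc) ▸ hy))
  have hzO : z ∈ sbox K s ↑z := fun β _ => rfl
  obtain ⟨d, hdO, hdD⟩ :=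
    mem_closure_iff.mp (hHD z hzH) _ (isOpen_sbox s ↑z) hzO
  have hdH : d ∈ H := hDH hdD
  rw [Set.ssubset_iff_of_subset (image_mono hFH.subset)]
  refine ⟨truncate α ↑d, ⟨d, hdH, rfl⟩, ?_⟩
  rintro ⟨y, hyF, heq⟩
  have hyd : y = d := hg2 d y (truncate_mono (le_of_lt (hbd _ (mem_insert_of_mem _ ⟨d, hdD, rfl⟩))) heq)
  subst hyd
  obtain ⟨β, hβs, hβne⟩ := hs y hyF
  exact hβne (hdO β hβs)


/-- From the irreducibility hypothesis: capture + irreducibility in concrete form. -/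
lemma B0 (hyp : ∀ H : Set ↥K, IsClosed H → ∃ α : Ordinal.{0}, α < ω1 ∧
      IrreducibleOn (fun x : ↥K => truncate α ↑x)
        ((fun x : ↥K => truncate α ↑x) ⁻¹' ((fun x : ↥K => truncate α ↑x) '' H)))
    (H : Set ↥K) (hH : IsClosed H) :
    ∃ α : Ordinal.{0}, α < ω1 ∧
      (∀ x : ↥K, (∃ h ∈ H, truncate α ↑h = truncate α ↑x) → x ∈ H) ∧
      (∀ F : Set ↥K, F ⊆ H → IsClosed F → F ≠ H →
        ∃ h ∈ H, ∀ y ∈ F, truncate α ↑y ≠ truncate α ↑h) := by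
  obtain ⟨α, hα, hirr⟩ := hyp H hH
  have hHA : H ⊆ (fun x : ↥K => truncate α ↑x) ⁻¹' ((fun x : ↥K => truncate α ↑x) '' H) :=
    fun h hh => ⟨h, hh, rfl⟩
  have him : (fun x : ↥K => truncate α ↑x) ''
      ((fun x : ↥K => truncate α ↑x) ⁻¹' ((fun x : ↥K => truncate α ↑x) '' H)) =
      (fun x : ↥K => truncate α ↑x) '' H := by
    apply Subset.antisymm
    · rintro _ ⟨x, hx, rfl⟩; exact hx
    · exact image_mono hHA
  have hAH : (fun x : ↥K => truncate α ↑x) ⁻¹' ((fun x : ↥K => truncate α ↑x) '' H) = H := by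
    by_contra hne
    have := hirr H hHA (hH.preimage continuous_subtype_val) (fun h => hne h.symm)
    rw [him] at this
    exact ssubset_irrefl _ this
  refine ⟨α, hα, ?_, ?_⟩
  · intro x hx
    rw [← hAH]
    obtain ⟨h, hh, heq⟩ := hx
    exact ⟨h, hh, heq⟩
  · intro F hFH hFcl hFne
    have hstrict := hirr F (by intro y hy; rw [hAH]; exact hFH hy) (hFcl.preimage continuous_subtype_val)
      (fun h => hFne (h.trans hAH))
    rw [him] at hstrict
    obtain ⟨p, hpH, hpF⟩ := exists_of_ssubset hstrict
    obtain ⟨h, hh, rfl⟩ := hpH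
    exact ⟨h, hh, fun y hy heq => hpF ⟨y, hy, heq⟩⟩

/-- Backward: hereditarily Lindelöf. -/
lemma B1 (hKcl : IsClosed K)
    (hyp : ∀ H : Set ↥K, IsClosed H → ∃ α : Ordinal.{0}, α < ω1 ∧
      IrreducibleOn (fun x : ↥K => truncate α ↑x)
        ((fun x : ↥K => truncate α ↑x) ⁻¹' ((fun x : ↥K => truncate α ↑x) '' H)))
    (Y : Set ↥K) : IsLindelof Y := by
  classical
  haveI := compactSpaceK hKcl
  rw [isLindelof_iff_countable_subcover]
  intro ι U hUo hYU
  set H : Set ↥K := (⋃ i, U i)ᶜ with hHdef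
  have hH : IsClosed H := (isOpen_iUnion hUo).isClosed_compl
  obtain ⟨α, hα, hsat, -⟩ := B0 hyp H hH
  haveI : Countable ↥(Set.Iio α) := countable_Iio_of_lt_ω1 hα
  -- every point of Hᶜ is in a compact box disjoint from H
  have hboxes : ∀ x : ↥K, x ∈ Hᶜ → ∃ e : Finset (↥(Set.Iio α) × Bool),
      x ∈ cbox K e ∧ cbox K e ∩ H = ∅ := by
    intro x hx
    obtain ⟨s, hs⟩ := sep_finset hKcl hH α (↑x) (by
      intro y hy
      by_contra hc
      push_neg at hc
      refine hx (hsat x ⟨y, hy, ?_⟩)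
      exact truncate_eq_iff.mpr hc)
    refine ⟨s.image (fun β => (β, (x : Ordinal.{0} → Bool) ↑β)), ?_, ?_⟩
    · intro p hp
      obtain ⟨β, hβ, rfl⟩ := Finset.mem_image.mp hp
      rfl
    · apply eq_empty_iff_forall_notMem.mpr
      rintro y ⟨hybox, hyH⟩
      obtain ⟨β, hβ, hne⟩ := hs y hyH
      exact hne (hybox (β, (x : Ordinal.{0} → Bool) ↑β)
        (Finset.mem_image.mpr ⟨β, hβ, rfl⟩))
  -- choose finite subcovers for each good box
  have hsub : ∀ e : Finset (↥(Set.Iio α) × Bool), ∃ t : Finset ι,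
      cbox K e ∩ H = ∅ → cbox K e ⊆ ⋃ i ∈ t, U i := by
    intro e
    by_cases he : cbox K e ∩ H = ∅
    · have hcomp : IsCompact (cbox K e) := (isClosed_cbox e).isCompact
      have hcov : cbox K e ⊆ ⋃ i, U i := by
        intro y hy
        by_contra hyn
        exact (eq_empty_iff_forall_notMem.mp he y) ⟨hy, hyn⟩
      obtain ⟨t, ht⟩ := hcomp.elim_finite_subcover U hUo hcov
      exact ⟨t, fun _ => ht⟩
    · exact ⟨∅, fun h => absurd h he⟩
  choose t ht using hsub
  refine ⟨⋃ e : Finset (↥(Set.Iio α) × Bool), (t e : Set ι), ?_, ?_⟩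
  · exact countable_iUnion fun e => (t e).countable_toSet
  · intro y hy
    have hyW : y ∈ Hᶜ := by
      rw [hHdef, compl_compl]
      exact hYU hy
    obtain ⟨e, hye, heH⟩ := hboxes y hyW
    have := ht e heH hye
    rw [mem_iUnion₂] at this
    obtain ⟨i, hit, hyi⟩ := this
    rw [mem_iUnion₂]
    exact ⟨i, mem_iUnion.mpr ⟨e, hit⟩, hyi⟩


/-- Backward: hereditarily separable. -/
lemma B2 (hKcl : IsClosed K)
    (hyp : ∀ H : Set ↥K, IsClosed H → ∃ α : Ordinal.{0}, α < ω1 ∧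
      IrreducibleOn (fun x : ↥K => truncate α ↑x)
        ((fun x : ↥K => truncate α ↑x) ⁻¹' ((fun x : ↥K => truncate α ↑x) '' H)))
    (Y : Set ↥K) : TopologicalSpace.SeparableSpace ↥Y := by
  classical
  set H : Set ↥K := closure Y with hHdef
  obtain ⟨α, hα, -, hirr⟩ := B0 hyp H isClosed_closure
  haveI : Countable ↥(Set.Iio α) := countable_Iio_of_lt_ω1 hα
  -- pick a point of Y in each box meeting Y
  set pick : Finset (↥(Set.Iio α) × Bool) → Set ↥K := fun e =>
    if h : (cbox K e ∩ Y).Nonempty then {h.choose} else ∅ with hpick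
  set D : Set ↥K := ⋃ e, pick e with hDdef
  have hDc : D.Countable := countable_iUnion (fun e => by
    by_cases h : (cbox K e ∩ Y).Nonempty <;>
      simp [hpick, h, countable_singleton])
  have hDY : D ⊆ Y := by
    intro d hd
    obtain ⟨e, hde⟩ := mem_iUnion.mp hd
    by_cases h : (cbox K e ∩ Y).Nonempty
    · simp only [hpick, dif_pos h, mem_singleton_iff] at hde
      exact hde ▸ h.choose_spec.2
    · simp [hpick, dif_neg h] at hde
  -- Y ⊆ closure D
  have hYD : Y ⊆ closure D := by
    set F : Set ↥K := closure D ∩ H with hFdef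
    by_cases hFH : F = H
    · intro y hy
      have : y ∈ H := subset_closure hy
      rw [← hFH] at this
      exact this.1
    · exfalso
      have hFsub : F ⊆ H := inter_subset_right
      have hFcl : IsClosed F := isClosed_closure.inter isClosed_closure
      obtain ⟨h₀, hh₀, hfib⟩ := hirr F hFsub hFcl hFH
      -- every element of F differs from h₀ below α
      obtain ⟨s, hs⟩ := sep_finset hKcl hFcl α (↑h₀) (by
        intro y hy
        have := hfib y hy
        by_contra hc
        push_neg at hc
        exact this (truncate_eq_iff.mpr hc))
      set e : Finset (↥(Set.Iio α) × Bool) :=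
        s.image (fun β => (β, (h₀ : Ordinal.{0} → Bool) ↑β)) with hedef
      have hh₀e : h₀ ∈ cbox K e := by
        intro p hp
        obtain ⟨β, hβ, rfl⟩ := Finset.mem_image.mp hp
        rfl
      -- box around h₀ misses F
      have heF : ∀ y ∈ cbox K e, y ∉ F := by
        intro y hye hyF
        obtain ⟨β, hβ, hne⟩ := hs y hyF
        exact hne (hye (β, (h₀ : Ordinal.{0} → Bool) ↑β) (Finset.mem_image.mpr ⟨β, hβ, rfl⟩))
      -- but h₀ ∈ closure Y, so the box meets Y, hence contains a point of D ⊆ F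
      have hmeet : (cbox K e ∩ Y).Nonempty :=
        mem_closure_iff.mp hh₀ _ (isOpen_cbox e) hh₀e
      have hde : pick e = {hmeet.choose} := dif_pos hmeet
      have hdD : hmeet.choose ∈ D := mem_iUnion.mpr ⟨e, by rw [hde]; exact rfl⟩
      have hdF : hmeet.choose ∈ F :=
        ⟨subset_closure hdD, subset_closure hmeet.choose_spec.2⟩
      exact heF _ hmeet.choose_spec.1 hdF
  -- convert to separability of the subtype
  refine ⟨⟨Subtype.val ⁻¹' D, ?_, ?_⟩⟩
  · exact hDc.preimage Subtype.val_injective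
  · intro y
    rw [closure_subtype]
    have : Subtype.val '' (Subtype.val ⁻¹' D : Set ↥Y) = D := by
      rw [Set.image_preimage_eq_inter_range, Subtype.range_coe_subtype]
      exact inter_eq_self_of_subset_left hDY
    rw [this]
    exact hYD y.2

end

/-- Let `K` be a closed subspace of `2^{ω₁}` and for `α ≤ ω₁` let `π_α : K → 2^α` be the
restriction map `x ↦ x↾α`. Then `K` is hereditarily separable and hereditarily Lindelöf
if and only if for every closed `H ⊆ K` there is an `α < ω₁` such that `π_α` is
irreducible on `π_α⁻¹(π_α(H))`. -/
theorem hereditarilySeparable_and_hereditarilyLindelof_iff_irreducible_projections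
    (K : Set (Ordinal.{0} → Bool)) (hKcl : IsClosed K)
    (hKsub : ∀ x ∈ K, truncate ω1 x = x) :
    ((∀ Y : Set ↥K, TopologicalSpace.SeparableSpace Y) ∧
      (∀ Y : Set ↥K, IsLindelof Y)) ↔
    ∀ H : Set ↥K, IsClosed H → ∃ α : Ordinal.{0}, α < ω1 ∧
      IrreducibleOn (fun x : ↥K => truncate α ↑x)
        ((fun x : ↥K => truncate α ↑x) ⁻¹' ((fun x : ↥K => truncate α ↑x) '' H)) := by
  constructor
  · rintro ⟨hSep, hLin⟩ H hH
    exact forward hKcl hKsub hSep hLin H hH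
  · intro hyp
    exact ⟨fun Y => B2 hKcl hyp Y, fun Y => B1 hKcl hyp Y⟩

end
end
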